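/- arXiv:1112.3853 — 4 statements merged into one kernel-verified Lean document; each statement's English description precedes it below -/
import Mathlib

section
/- A linear map 𝒞 : Matrix n n ℂ → Matrix m m ℂ is completely positive if and only if its Choi operator C := Σ_{i,j} 𝒞(E_{ij}) ⊗ E_{ij} is positive semidefinite. -/
open ComplexOrder

noncomputable section

/-- Choi operator `∑ i j, F(E i j) ⊗ E i j` of a map between matrix algebras,
where `E i j` are the matrix units. -/
def choiFun {I O : Type} [Fintype I] [DecidableEq I]
    (F : Matrix I I ℂ → Matrix O O ℂ) : Matrix (O × I) (O × I) ℂ :=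
  ∑ i : I, ∑ j : I,
    Matrix.kroneckerMap (· * ·) (F (Matrix.single i j 1)) (Matrix.single i j 1)

/-- The extension `F ⊗ id` of a map on matrices, acting on a composite system. -/
def tensorId {I O K : Type} (F : Matrix I I ℂ → Matrix O O ℂ)
    (M : Matrix (I × K) (I × K) ℂ) : Matrix (O × K) (O × K) ℂ :=
  fun p q => F (fun i j => M (i, p.2) (j, q.2)) p.1 q.1

/-- Complete positivity of a linear map between matrix algebras: for every
`k ∈ ℕ`, `F ⊗ id_{Matrix (Fin k) (Fin k) ℂ}` preserves positive semidefiniteness. -/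
def IsCPMap {I O : Type} [Fintype I] [Fintype O]
    (F : Matrix I I ℂ →ₗ[ℂ] Matrix O O ℂ) : Prop :=
  ∀ (k : ℕ) (M : Matrix (I × Fin k) (I × Fin k) ℂ),
    M.PosSemidef → (tensorId (⇑F) M).PosSemidef

/-- Quantum channel: completely positive and trace preserving. -/
def IsCPTPMap {I O : Type} [Fintype I] [Fintype O]
    (F : Matrix I I ℂ →ₗ[ℂ] Matrix O O ℂ) : Prop :=
  IsCPMap F ∧ ∀ M : Matrix I I ℂ, (F M).trace = M.trace

/-- Partial trace over the first tensor factor. -/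
def ptr1 {O I : Type} [Fintype O] (C : Matrix (O × I) (O × I) ℂ) : Matrix I I ℂ :=
  fun i j => ∑ p : O, C (p, i) (p, j)

/-- Partial trace over the second tensor factor. -/
def ptr2 {O I : Type} [Fintype I] (C : Matrix (O × I) (O × I) ℂ) : Matrix O O ℂ :=
  fun p q => ∑ j : I, C (p, j) (q, j)

/-- `dyadM K = |K⟩⟩⟨⟨K|`, the rank-one operator associated with the
vectorization `|K⟩⟩ = ∑ i j, K i j |i⟩⊗|j⟩` of the matrix `K`. -/
def dyadM {m n : Type} (K : Matrix m n ℂ) : Matrix (m × n) (m × n) ℂ :=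
  fun p q => K p.1 p.2 * star (K q.1 q.2)

lemma choiFun_apply' {I O : Type} [Fintype I] [DecidableEq I]
    (F : Matrix I I ℂ → Matrix O O ℂ) (a b : O) (i j : I) :
    choiFun F (a, i) (b, j) = F (Matrix.single i j 1) a b := by
  simp [choiFun, Matrix.sum_apply, Matrix.kroneckerMap_apply, Matrix.single,
    ite_and, mul_ite, mul_one, mul_zero, Finset.sum_ite_eq, Finset.sum_ite_eq']

lemma tensorId_apply' {n m : ℕ} (𝒞 : Matrix (Fin n) (Fin n) ℂ →ₗ[ℂ] Matrix (Fin m) (Fin m) ℂ)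
    {K : Type} [Fintype K] (M : Matrix (Fin n × K) (Fin n × K) ℂ)
    (a b : Fin m) (s t : K) :
    tensorId ⇑𝒞 M (a, s) (b, t)
      = ∑ i : Fin n, ∑ j : Fin n, M (i, s) (j, t) * 𝒞 (Matrix.single i j 1) a b := by
  have h1 : ((fun i j => M (i, s) (j, t)) : Matrix (Fin n) (Fin n) ℂ)
      = ∑ i : Fin n, ∑ j : Fin n, M (i, s) (j, t) • Matrix.single i j 1 := by
    conv_lhs => rw [Matrix.matrix_eq_sum_single
      ((fun i j => M (i, s) (j, t)) : Matrix (Fin n) (Fin n) ℂ)]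
    refine Finset.sum_congr rfl fun i _ => Finset.sum_congr rfl fun j _ => ?_
    rw [Matrix.smul_single, smul_eq_mul, mul_one]
  show 𝒞 (fun i j => M (i, s) (j, t)) a b = _
  rw [h1, map_sum]
  simp only [map_sum, map_smul, Matrix.sum_apply, Matrix.smul_apply, smul_eq_mul]

lemma dyadM_posSemidef' {m' n' : Type} [Fintype m'] [Fintype n'] (K : Matrix m' n' ℂ) :
    (dyadM K).PosSemidef := by
  rw [Matrix.posSemidef_iff_dotProduct_mulVec]
  constructor
  · ext p q
    simp [dyadM, Matrix.conjTranspose_apply, star_mul', mul_comm]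
  · intro x
    have h : dotProduct (star x) ((dyadM K).mulVec x)
        = star (∑ q : m' × n', star (K q.1 q.2) * x q) * (∑ q : m' × n', star (K q.1 q.2) * x q) := by
      simp only [dotProduct, Matrix.mulVec, dyadM, Pi.star_apply, star_sum, star_mul',
        star_star, Finset.mul_sum, Finset.sum_mul]
      rw [Finset.sum_comm]
      exact Finset.sum_congr rfl fun p _ => Finset.sum_congr rfl fun q _ => by ring
    rw [h]
    exact star_mul_self_nonneg _

lemma sum_comm4' {α β γ δ : Type} [Fintype α] [Fintype β] [Fintype γ] [Fintype δ]
    (f : α → β → γ → δ → ℂ) :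
    ∑ a, ∑ b, ∑ c, ∑ d, f a b c d = ∑ c, ∑ d, ∑ a, ∑ b, f a b c d := by
  trans ∑ a, ∑ c, ∑ b, ∑ d, f a b c d
  · exact Finset.sum_congr rfl fun a _ => Finset.sum_comm
  rw [Finset.sum_comm]
  refine Finset.sum_congr rfl fun c _ => ?_
  trans ∑ a, ∑ d, ∑ b, f a b c d
  · exact Finset.sum_congr rfl fun a _ => Finset.sum_comm
  exact Finset.sum_comm

/-- Choi's theorem: a linear map between matrix algebras is
completely positive iff its Choi operator is positive semidefinite. -/
theorem stmt1 (n m : ℕ)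
    (𝒞 : Matrix (Fin n) (Fin n) ℂ →ₗ[ℂ] Matrix (Fin m) (Fin m) ℂ) :
    IsCPMap 𝒞 ↔ (choiFun ⇑𝒞).PosSemidef := by
  constructor
  · intro h
    have key := h n (dyadM (1 : Matrix (Fin n) (Fin n) ℂ)) (dyadM_posSemidef' _)
    have heq : choiFun ⇑𝒞 = tensorId ⇑𝒞 (dyadM (1 : Matrix (Fin n) (Fin n) ℂ)) := by
      ext ⟨a, s⟩ ⟨b, t⟩
      rw [choiFun_apply', tensorId_apply']
      simp [dyadM, Matrix.one_apply, apply_ite (star : ℂ → ℂ), mul_ite, ite_mul, one_mul,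
        zero_mul, mul_one, mul_zero, Finset.sum_ite_eq, Finset.sum_ite_eq']
    rw [heq]
    exact key
  · intro hC k M hM
    obtain ⟨B, hB⟩ : ∃ B : Matrix (Fin n × Fin k) (Fin n × Fin k) ℂ, _ = B.conjTranspose * B := by
      open scoped MatrixOrder in exact CStarAlgebra.nonneg_iff_eq_star_mul_self.mp hM.nonneg
    obtain ⟨D, hD⟩ : ∃ D : Matrix (Fin m × Fin n) (Fin m × Fin n) ℂ, _ = D.conjTranspose * D := by
      open scoped MatrixOrder in exact CStarAlgebra.nonneg_iff_eq_star_mul_self.mp hC.nonneg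
    set L : Matrix ((Fin m × Fin n) × (Fin n × Fin k)) (Fin m × Fin k) ℂ :=
      fun ru p => ∑ j : Fin n, D ru.1 (p.1, j) * B ru.2 (j, p.2) with hL
    have hT : tensorId ⇑𝒞 M = L.conjTranspose * L := by
      ext ⟨a, s⟩ ⟨b, t⟩
      rw [tensorId_apply']
      have hCapp : ∀ i j : Fin n, (𝒞 (Matrix.single i j 1)) a b
          = ∑ r : Fin m × Fin n, star (D r (a, i)) * D r (b, j) := fun i j => by
        rw [← choiFun_apply' ⇑𝒞 a b i j, hD]
        simp [Matrix.mul_apply, Matrix.conjTranspose_apply]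
      have hMapp : ∀ i j : Fin n, M (i, s) (j, t)
          = ∑ u : Fin n × Fin k, star (B u (i, s)) * B u (j, t) := fun i j => by
        conv_lhs => rw [hB]
        simp [Matrix.mul_apply, Matrix.conjTranspose_apply]
      simp only [hCapp, hMapp]
      rw [Matrix.mul_apply]
      simp only [Matrix.conjTranspose_apply]; simp only [hL]
      conv_rhs => rw [Fintype.sum_prod_type]
      simp only [star_sum, star_mul', Finset.sum_mul, Finset.mul_sum]
      rw [sum_comm4']
      refine Finset.sum_congr rfl fun i _ => Finset.sum_congr rfl fun j _ => ?_
      rw [Finset.sum_comm]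
      exact Finset.sum_congr rfl fun u _ => Finset.sum_congr rfl fun r _ => by ring
    rw [hT]
    exact Matrix.posSemidef_conjTranspose_mul_self L

end
end

section
/- Every deterministic N-comb R on finite-dimensional Hilbert spaces (H_0, …, H_{2N−1}) admits a realization by quantum channels C_i : L(H_{2i−2} ⊗ A_{i−1}) → L(H_{2i−1} ⊗ A_i) (i = 1, …, N, with A_0 = A_N = ℂ and C_1 * ⋯ * C_N = R) in which the ancilla dimensions satisfy dim A_k = rank(R^(k)) for every k = 1, …, N−1, where R^(k) are the positive semidefinite operators appearing in the comb normalization hierarchy of R. -/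
open ComplexOrder

noncomputable section

/-- `Sp H k` represents the Hilbert space `H 0 ⊗ H 1 ⊗ ⋯ ⊗ H (k-1)` via its
(finite) index type, encoded as an iterated product. -/
def Sp (H : ℕ → Type) : ℕ → Type
  | 0 => PUnit
  | (k+1) => Sp H k × H k

instance spFintype (H : ℕ → Type) [∀ i, Fintype (H i)] : ∀ k, Fintype (Sp H k)
  | 0 => inferInstanceAs (Fintype PUnit)
  | (k+1) => letI := spFintype H k; inferInstanceAs (Fintype (Sp H k × H k))

instance spDecEq (H : ℕ → Type) [∀ i, DecidableEq (H i)] : ∀ k, DecidableEq (Sp H k)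
  | 0 => inferInstanceAs (DecidableEq PUnit)
  | (k+1) => letI := spDecEq H k; inferInstanceAs (DecidableEq (Sp H k × H k))

/-- Partial trace over the last tensor factor `H k`. -/
def lastTrace {H : ℕ → Type} [∀ i, Fintype (H i)] {k : ℕ}
    (M : Matrix (Sp H (k+1)) (Sp H (k+1)) ℂ) : Matrix (Sp H k) (Sp H k) ℂ :=
  fun a b => ∑ j : H k, M (a, j) (b, j)

/-- Tensoring with the identity on a newly appended last factor `H k`:
`idExtend M = I_{H k} ⊗ M` (factors ordered with `H k` last). -/
def idExtend {H : ℕ → Type} [∀ i, DecidableEq (H i)] {k : ℕ}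
    (M : Matrix (Sp H k) (Sp H k) ℂ) : Matrix (Sp H (k+1)) (Sp H (k+1)) ℂ :=
  fun p q => (if p.2 = q.2 then (1 : ℂ) else 0) * M p.1 q.1

/-- `R` is a deterministic `N`-comb on `(H 0, …, H (2N-1))`. -/
def IsDetComb (N : ℕ) (H : ℕ → Type) [∀ i, Fintype (H i)] [∀ i, DecidableEq (H i)]
    (R : Matrix (Sp H (2*N)) (Sp H (2*N)) ℂ) : Prop :=
  ∃ Rk : (k : ℕ) → Matrix (Sp H (2*k)) (Sp H (2*k)) ℂ,
    Rk N = R ∧ Rk 0 = 1 ∧ (∀ k, k ≤ N → (Rk k).PosSemidef) ∧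
    ∀ k, k < N → lastTrace (k := 2*k+1) (Rk (k+1)) = idExtend (Rk k)

/-- The Choi operator of the chain (link product) `C 0 * C 1 * ⋯ * C (k-1)` of the
first `k` steps of a strategy, where `C i` is the Choi operator of the channel of
step `i+1`, with input wire `H (2i)`, output wire `H (2i+1)`, input ancilla `A i`
and output ancilla `A (i+1)`.  The ancillas are contracted by the link product. -/
def chain {H A : ℕ → Type} [∀ i, Fintype (H i)] [∀ i, Fintype (A i)] [∀ i, DecidableEq (A i)]
    (C : (i : ℕ) → Matrix ((H (2*i+1) × A (i+1)) × (H (2*i) × A i))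
                          ((H (2*i+1) × A (i+1)) × (H (2*i) × A i)) ℂ) :
    (k : ℕ) → Matrix (Sp H (2*k) × A k) (Sp H (2*k) × A k) ℂ
  | 0 => fun p q => if p.2 = q.2 then 1 else 0
  | (k+1) => fun p q =>
      ∑ α : A k, ∑ α' : A k,
        chain C k (p.1.1.1, α) (q.1.1.1, α') *
        C k ((p.1.2, p.2), (p.1.1.2, α)) ((q.1.2, q.2), (q.1.1.2, α'))

/-- A realization of the operator `R` as a sequence of `N` quantum channels
`𝒞 i : L(H (2i) ⊗ A i) → L(H (2i+1) ⊗ A (i+1))` (with trivial, i.e. one-dimensional,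
initial and final ancillas) whose link product equals `R`. -/
structure Realization (N : ℕ) (H : ℕ → Type) [∀ i, Fintype (H i)] [∀ i, DecidableEq (H i)]
    (R : Matrix (Sp H (2*N)) (Sp H (2*N)) ℂ) where
  A : ℕ → Type
  [instF : ∀ i, Fintype (A i)]
  [instD : ∀ i, DecidableEq (A i)]
  h0 : Unique (A 0)
  hN : Unique (A N)
  C : (i : ℕ) → Matrix ((H (2*i+1) × A (i+1)) × (H (2*i) × A i))
                       ((H (2*i+1) × A (i+1)) × (H (2*i) × A i)) ℂ
  hchan : ∀ i, i < N →
    ∃ F : Matrix (H (2*i) × A i) (H (2*i) × A i) ℂ →ₗ[ℂ]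
          Matrix (H (2*i+1) × A (i+1)) (H (2*i+1) × A (i+1)) ℂ,
      IsCPTPMap F ∧ choiFun (⇑F) = C i
  hlink : ∀ a b β β', chain C N (a, β) (b, β') = R a b



set_option linter.unusedSectionVars false

namespace Stmt7Aux
open Matrix


/-- PSD from a Gram representation. -/
lemma psd_of_repr {n S : Type} [Fintype n] [Fintype S] (M : Matrix n n ℂ) (f : S → n → ℂ)
    (h : ∀ u v, M u v = ∑ s, star (f s u) * f s v) : M.PosSemidef := by
  have hM : M = (Matrix.of fun (s : S) (u : n) => f s u)ᴴ * (Matrix.of fun s u => f s u) := by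
    ext u v
    simp [Matrix.mul_apply, Matrix.conjTranspose_apply, h u v]
  rw [hM]
  exact Matrix.posSemidef_conjTranspose_mul_self _

/-- Gram representation from PSD. -/
lemma repr_of_psd {n : Type} [Fintype n] [DecidableEq n] {M : Matrix n n ℂ}
    (hM : M.PosSemidef) : ∃ f : n → n → ℂ, ∀ u v, M u v = ∑ s, star (f s u) * f s v := by
  open scoped MatrixOrder in
  obtain ⟨B, hB⟩ := CStarAlgebra.nonneg_iff_eq_star_mul_self.mp hM.nonneg
  refine ⟨fun s u => B s u, fun u v => ?_⟩
  rw [hB]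
  simp [Matrix.mul_apply, Matrix.conjTranspose_apply, Matrix.star_apply]

lemma psd_trace_zero {n : Type} [Fintype n] [DecidableEq n] {M : Matrix n n ℂ}
    (hM : M.PosSemidef) (h : ∑ u, M u u = 0) : M = 0 := by
  obtain ⟨f, hf⟩ := repr_of_psd hM
  have h1 : ∑ u, ∑ s, ((starRingEnd ℂ) (f s u) * f s u) = 0 := by
    rw [← h]; exact Finset.sum_congr rfl fun u _ => (hf u u).symm
  have h1' : ((∑ u : n, ∑ s : n, Complex.normSq (f s u) : ℝ) : ℂ) = 0 := by
    push_cast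
    rw [← h1]
    exact Finset.sum_congr rfl fun u _ => Finset.sum_congr rfl fun s _ =>
      (Complex.normSq_eq_conj_mul_self).symm ▸ rfl
  have h2 : ∀ s u, f s u = 0 := by
    intro s u
    have hnn : ∀ u ∈ Finset.univ, (0:ℝ) ≤ ∑ s : n, Complex.normSq (f s u) :=
      fun u _ => Finset.sum_nonneg fun s _ => Complex.normSq_nonneg _
    have hz : ∑ u : n, ∑ s : n, Complex.normSq (f s u) = 0 := by exact_mod_cast h1'
    have hu := (Finset.sum_eq_zero_iff_of_nonneg hnn).mp hz u (Finset.mem_univ u)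
    have hs := (Finset.sum_eq_zero_iff_of_nonneg
      (fun s _ => Complex.normSq_nonneg (f s u))).mp hu s (Finset.mem_univ s)
    exact Complex.normSq_eq_zero.mp hs
  ext u v
  rw [hf]
  simp [h2]



lemma exists_rank_factor {n : Type} [Fintype n] [DecidableEq n] {M : Matrix n n ℂ}
    (hM : M.PosSemidef) :
    ∃ (T : Matrix n (Fin M.rank) ℂ) (T' : Matrix (Fin M.rank) n ℂ),
      M = T * Tᴴ ∧ T' * T = 1 := by
  have hH : M.IsHermitian := hM.1
  set lam : n → ℝ := hH.eigenvalues with hlam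
  set U : Matrix n n ℂ := (hH.eigenvectorUnitary : Matrix n n ℂ) with hU
  have hrank : Fintype.card {i // lam i ≠ 0} = M.rank := (hH.rank_eq_card_non_zero_eigs).symm
  let e : Fin M.rank ≃ {i // lam i ≠ 0} := (Fintype.equivFinOfCardEq hrank).symm
  have hpos : ∀ s : Fin M.rank, 0 < lam (e s) :=
    fun s => lt_of_le_of_ne (hM.eigenvalues_nonneg _) (Ne.symm (e s).2)
  have hsq : ∀ s : Fin M.rank, (Real.sqrt (lam (e s)) : ℂ) ≠ 0 := by
    intro s
    simpa using (Real.sqrt_pos.mpr (hpos s)).ne'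
  refine ⟨Matrix.of fun a s => U a (e s) * (Real.sqrt (lam (e s)) : ℂ),
    Matrix.of fun s b => ((Real.sqrt (lam (e s)) : ℂ))⁻¹ * star (U b (e s)), ?_, ?_⟩
  · -- M = T * Tᴴ
    have hspec := hH.spectral_theorem
    ext a b
    have hMab : M a b = ∑ i : n, U a i * (lam i : ℂ) * star (U b i) := by
      conv_lhs => rw [hspec, Unitary.conjStarAlgAut_apply]
      rw [Matrix.mul_apply]
      refine Finset.sum_congr rfl fun i _ => ?_
      rw [Matrix.mul_diagonal]
      simp [Matrix.conjTranspose_apply, hU, hlam]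
    rw [hMab, Matrix.mul_apply]
    have hterm : ∀ s : Fin M.rank,
        (Matrix.of fun a s => U a (e s) * (Real.sqrt (lam (e s)) : ℂ)) a s *
          star ((Matrix.of fun a s => U a (e s) * (Real.sqrt (lam (e s)) : ℂ)) b s)
        = U a (e s) * (lam (e s) : ℂ) * star (U b (e s)) := by
      intro s
      simp only [Matrix.of_apply, star_mul']
      have h1 : (star (Real.sqrt (lam (e s)) : ℂ)) = (Real.sqrt (lam (e s)) : ℂ) := by
        simp [Complex.star_def, Complex.conj_ofReal]
      rw [h1]
      have hss : (Real.sqrt (lam (e s)) : ℂ) * (Real.sqrt (lam (e s)) : ℂ) = (lam (e s) : ℂ) := by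
        rw [← Complex.ofReal_mul, Real.mul_self_sqrt (hpos s).le]
      ring_nf
      rw [sq, hss]
      ring
    have hzero : ∀ i ∈ Finset.univ, (fun i => U a i * (lam i : ℂ) * star (U b i)) i ≠ 0 →
        lam i ≠ 0 := by
      intro i _ hne h0
      exact hne (by simp [h0])
    calc ∑ i : n, U a i * (lam i : ℂ) * star (U b i)
        = ∑ i ∈ Finset.univ.filter (fun i => lam i ≠ 0),
            U a i * (lam i : ℂ) * star (U b i) := (Finset.sum_filter_of_ne hzero).symm
      _ = ∑ i : {i // lam i ≠ 0}, U a (i : n) * (lam (i : n) : ℂ) * star (U b (i : n)) :=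
          (Finset.sum_subtype _ (by simp) _)
      _ = ∑ s : Fin M.rank, U a (e s) * (lam (e s) : ℂ) * star (U b (e s)) :=
          (Equiv.sum_comp e (fun i => U a (i : n) * ((lam (i : n) : ℝ) : ℂ) * star (U b (i : n)))).symm
      _ = _ := by
          refine Finset.sum_congr rfl fun s _ => ?_
          simp only [Matrix.conjTranspose_apply]
          exact (hterm s).symm
  · -- T' * T = 1
    have hUU : star U * U = 1 := hH.eigenvectorUnitary.2.1
    ext s t
    rw [Matrix.mul_apply]
    have hrw : ∀ b, (Matrix.of fun s b => ((Real.sqrt (lam (e s)) : ℂ))⁻¹ * star (U b (e s))) s b *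
        (Matrix.of fun a s => U a (e s) * (Real.sqrt (lam (e s)) : ℂ)) b t
        = ((Real.sqrt (lam (e s)) : ℂ))⁻¹ * (Real.sqrt (lam (e t)) : ℂ) *
          (star (U b (e s)) * U b (e t)) := by
      intro b; simp only [Matrix.of_apply]; ring
    rw [Finset.sum_congr rfl fun b _ => hrw b, ← Finset.mul_sum]
    have hent : ∑ b, star (U b (e s)) * U b (e t) = if (e s : n) = (e t : n) then 1 else 0 := by
      have h2 := congrFun (congrFun hUU (e s : n)) (e t : n)
      rw [Matrix.mul_apply] at h2
      simp only [Matrix.star_apply] at h2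
      rw [h2]
      simp [Matrix.one_apply]
    rw [hent]
    by_cases hst : s = t
    · subst hst
      simp [inv_mul_cancel₀ (hsq s), Matrix.one_apply]
    · have hne : ((e s : n)) ≠ (e t : n) := fun h => hst (e.injective (Subtype.ext h))
      simp [hne, Matrix.one_apply, hst]



variable {W V V' X Y K : Type}

/-- `extMap A = A ⊗ I_X ⊗ I_Y`. -/
def extMap [DecidableEq X] [DecidableEq Y] (A : Matrix V W ℂ) :
    Matrix ((V × X) × Y) ((W × X) × Y) ℂ :=
  fun p q => A p.1.1 q.1.1 * (if p.1.2 = q.1.2 then 1 else 0) * (if p.2 = q.2 then 1 else 0)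

variable [Fintype W] [Fintype X] [Fintype Y] [DecidableEq X] [DecidableEq Y]

lemma extMap_mul_apply (A : Matrix V W ℂ) (Z : Matrix ((W × X) × Y) K ℂ)
    (α : V) (x : X) (y : Y) (q : K) :
    (extMap (X := X) (Y := Y) A * Z) ((α, x), y) q = ∑ a, A α a * Z ((a, x), y) q := by
  rw [Matrix.mul_apply]
  simp [extMap, Fintype.sum_prod_type, ite_mul, mul_ite, mul_zero, zero_mul, mul_one,
    Finset.sum_ite_eq]

lemma mul_extMap_conjTranspose_apply (Z : Matrix K ((W × X) × Y) ℂ) (B : Matrix V' W ℂ)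
    (q : K) (α' : V') (x' : X) (y' : Y) :
    (Z * (extMap (X := X) (Y := Y) B)ᴴ) q ((α', x'), y') = ∑ b, Z q ((b, x'), y') * star (B α' b) := by
  rw [Matrix.mul_apply]
  simp [extMap, Matrix.conjTranspose_apply, Fintype.sum_prod_type, ite_mul, mul_ite, mul_zero,
    zero_mul, mul_one, Finset.sum_ite_eq, star_mul', apply_ite (starRingEnd ℂ), mul_comm,
    mul_assoc, mul_left_comm]

lemma sumY [Fintype V] [Fintype V']
    (R2 : Matrix ((W × X) × Y) ((W × X) × Y) ℂ) (R1 : Matrix W W ℂ)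
    (htrace : ∀ a b x x', ∑ y, R2 ((a, x), y) ((b, x'), y)
      = (if x = x' then 1 else 0) * R1 a b)
    (A : Matrix V W ℂ) (B : Matrix V' W ℂ) (α : V) (α' : V') (x x' : X) :
    ∑ y, (extMap (X := X) (Y := Y) A * R2 * (extMap (X := X) (Y := Y) B)ᴴ) ((α, x), y) ((α', x'), y)
      = (if x = x' then 1 else 0) * (A * R1 * Bᴴ) α α' := by
  have h1 : ∀ y, (extMap (X := X) (Y := Y) A * R2 * (extMap (X := X) (Y := Y) B)ᴴ) ((α, x), y) ((α', x'), y)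
      = ∑ b, ∑ a, A α a * R2 ((a, x), y) ((b, x'), y) * star (B α' b) := by
    intro y
    rw [mul_extMap_conjTranspose_apply]
    refine Finset.sum_congr rfl fun b _ => ?_
    rw [extMap_mul_apply, Finset.sum_mul]
  rw [Finset.sum_congr rfl fun y _ => h1 y]
  rw [Finset.sum_comm]
  have h2 : ∀ b, ∑ y, ∑ a, A α a * R2 ((a, x), y) ((b, x'), y) * star (B α' b)
      = ∑ a, A α a * ((if x = x' then 1 else 0) * R1 a b) * star (B α' b) := by
    intro b
    rw [Finset.sum_comm]
    refine Finset.sum_congr rfl fun a _ => ?_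
    rw [← Finset.sum_mul, ← Finset.mul_sum, htrace a b x x']
  rw [Finset.sum_congr rfl fun b _ => h2 b]
  simp only [Matrix.mul_apply, Matrix.conjTranspose_apply, Finset.mul_sum, Finset.sum_mul]
  refine Finset.sum_congr rfl fun b _ => Finset.sum_congr rfl fun a _ => by ring



section StepLemmas

variable [DecidableEq W] {U' : Type}

lemma extMap_conjTranspose (A : Matrix V W ℂ) :
    (extMap (X := X) (Y := Y) A)ᴴ = extMap Aᴴ := by
  ext p q
  by_cases h1 : p.1.2 = q.1.2 <;> by_cases h2 : p.2 = q.2 <;>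
    simp [extMap, Matrix.conjTranspose_apply, h1, h2, eq_comm, star_mul']

lemma extMap_mul [Fintype U'] (A : Matrix V W ℂ) (B : Matrix W U' ℂ) :
    extMap (X := X) (Y := Y) A * extMap (X := X) (Y := Y) B = extMap (A * B) := by
  ext p q
  obtain ⟨⟨v, x⟩, y⟩ := p
  obtain ⟨⟨u, x'⟩, y'⟩ := q
  rw [extMap_mul_apply]
  simp only [extMap, Matrix.mul_apply, Finset.sum_mul]
  refine Finset.sum_congr rfl fun a _ => by ring

lemma extMap_one : extMap (1 : Matrix W W ℂ) = (1 : Matrix ((W × X) × Y) ((W × X) × Y) ℂ) := by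
  ext p q
  by_cases h1 : p.1.1 = q.1.1 <;> by_cases h2 : p.1.2 = q.1.2 <;> by_cases h3 : p.2 = q.2 <;>
    simp [extMap, Matrix.one_apply, Prod.ext_iff, h1, h2, h3]

variable {r r' : ℕ} (T : Matrix W (Fin r) ℂ) (T' : Matrix (Fin r) W ℂ)
  (S : Matrix ((W × X) × Y) (Fin r') ℂ)

lemma step_key (hT : T' * T = 1)
    (htrace : ∀ a b x x', ∑ y, (S * Sᴴ) ((a, x), y) ((b, x'), y)
      = (if x = x' then 1 else 0) * (T * Tᴴ) a b) :
    extMap (X := X) (Y := Y) (T * T') * S = S := by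
  set q : Matrix W W ℂ := 1 - T * T' with hq
  have hqT : q * T = 0 := by
    rw [hq, Matrix.sub_mul, Matrix.one_mul, Matrix.mul_assoc, hT, Matrix.mul_one, sub_self]
  have hM0 : (extMap (X := X) (Y := Y) q * S) * (extMap (X := X) (Y := Y) q * S)ᴴ = 0 := by
    apply psd_trace_zero (Matrix.posSemidef_self_mul_conjTranspose _)
    have hassoc : (extMap (X := X) (Y := Y) q * S) * (extMap (X := X) (Y := Y) q * S)ᴴ
        = extMap (X := X) (Y := Y) q * (S * Sᴴ) * (extMap (X := X) (Y := Y) q)ᴴ := by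
      rw [Matrix.conjTranspose_mul, Matrix.mul_assoc, Matrix.mul_assoc, Matrix.mul_assoc]
    rw [hassoc]
    rw [Fintype.sum_prod_type]
    have hz : ∀ p : W × X, ∑ y,
        (extMap (X := X) (Y := Y) q * (S * Sᴴ) * (extMap (X := X) (Y := Y) q)ᴴ)
          ((p.1, p.2), y) ((p.1, p.2), y) = 0 := by
      intro p
      rw [sumY (S * Sᴴ) (T * Tᴴ) htrace q q p.1 p.1 p.2 p.2]
      have : q * (T * Tᴴ) * qᴴ = 0 := by
        rw [← Matrix.mul_assoc, hqT, Matrix.zero_mul, Matrix.zero_mul]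
      rw [this]
      simp
    rw [Fintype.sum_prod_type]
    refine Finset.sum_eq_zero fun a _ => Finset.sum_eq_zero fun x _ => ?_
    exact hz (a, x)
  have h1 : extMap (X := X) (Y := Y) q * S = 0 :=
    Matrix.self_mul_conjTranspose_eq_zero.mp hM0
  have h2 : extMap (X := X) (Y := Y) q = 1 - extMap (T * T') := by
    rw [hq]
    have : extMap (X := X) (Y := Y) ((1 : Matrix W W ℂ) - T * T')
        = extMap (1 : Matrix W W ℂ) - extMap (T * T') := by
      ext p q'
      by_cases h1 : p.1.2 = q'.1.2 <;> by_cases h2 : p.2 = q'.2 <;>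
        simp [extMap, Matrix.sub_apply, sub_mul, h1, h2]
    rw [this, extMap_one]
  rw [h2, Matrix.sub_mul, Matrix.one_mul, sub_eq_zero] at h1
  exact h1.symm

lemma step_key' (hT : T' * T = 1)
    (htrace : ∀ a b x x', ∑ y, (S * Sᴴ) ((a, x), y) ((b, x'), y)
      = (if x = x' then 1 else 0) * (T * Tᴴ) a b)
    (a : W) (x : X) (y : Y) (γ : Fin r') :
    ∑ α, T a α * (extMap (X := X) (Y := Y) T' * S) ((α, x), y) γ = S ((a, x), y) γ := by
  calc ∑ α, T a α * (extMap (X := X) (Y := Y) T' * S) ((α, x), y) γ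
      = (extMap (X := X) (Y := Y) T * (extMap (X := X) (Y := Y) T' * S)) ((a, x), y) γ :=
        (extMap_mul_apply T _ a x y γ).symm
    _ = (extMap (X := X) (Y := Y) (T * T') * S) ((a, x), y) γ := by
        rw [← Matrix.mul_assoc, extMap_mul]
    _ = S ((a, x), y) γ := by rw [step_key T T' S hT htrace]

lemma step_tp (hT : T' * T = 1)
    (htrace : ∀ a b x x', ∑ y, (S * Sᴴ) ((a, x), y) ((b, x'), y)
      = (if x = x' then 1 else 0) * (T * Tᴴ) a b)
    (α α' : Fin r) (x x' : X) :
    ∑ y, ∑ γ, (extMap (X := X) (Y := Y) T' * S) ((α, x), y) γ *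
        star ((extMap (X := X) (Y := Y) T' * S) ((α', x'), y) γ)
      = (if x = x' then 1 else 0) * (if α = α' then 1 else 0) := by
  set Vt := extMap (X := X) (Y := Y) T' * S with hVt
  have h0 : ∀ y, ∑ γ, Vt ((α, x), y) γ * star (Vt ((α', x'), y) γ)
      = (Vt * Vtᴴ) ((α, x), y) ((α', x'), y) := by
    intro y
    rw [Matrix.mul_apply]
    exact Finset.sum_congr rfl fun γ _ => by rw [Matrix.conjTranspose_apply]
  rw [Finset.sum_congr rfl fun y _ => h0 y]
  have h1 : Vt * Vtᴴ = extMap (X := X) (Y := Y) T' * (S * Sᴴ) * (extMap (X := X) (Y := Y) T')ᴴ := by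
    rw [hVt, Matrix.conjTranspose_mul, Matrix.mul_assoc, Matrix.mul_assoc, Matrix.mul_assoc]
  rw [h1, sumY (S * Sᴴ) (T * Tᴴ) htrace T' T' α α' x x']
  have h2 : T' * (T * Tᴴ) * T'ᴴ = 1 := by
    rw [← Matrix.mul_assoc, hT, Matrix.one_mul, ← Matrix.conjTranspose_mul, hT,
      Matrix.conjTranspose_one]
  rw [h2, Matrix.one_apply]

end StepLemmas

lemma sum_ite_eq_double₁ {I J : Type} [Fintype I] [Fintype J] [DecidableEq I] [DecidableEq J]
    (f : I → J → ℂ) (i : I) (j : J) :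
    (∑ x : I, ∑ y : J, if x = i then if y = j then f x y else 0 else 0) = f i j := by
  rw [Finset.sum_eq_single i]
  · rw [Finset.sum_eq_single j]
    · simp
    · intro b _ hb; simp [hb]
    · intro h; exact absurd (Finset.mem_univ j) h
  · intro b _ hb; simp [hb]
  · intro h; exact absurd (Finset.mem_univ i) h

lemma sum_ite_eq_double₂ {I J : Type} [Fintype I] [Fintype J] [DecidableEq I] [DecidableEq J]
    (f : I → J → ℂ) (i : I) (j : J) :
    (∑ x : I, ∑ y : J, if i = x then if j = y then f x y else 0 else 0) = f i j := by
  rw [Finset.sum_eq_single i]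
  · rw [Finset.sum_eq_single j]
    · simp
    · intro b _ hb; simp [Ne.symm hb]
    · intro h; exact absurd (Finset.mem_univ j) h
  · intro b _ hb; simp [Ne.symm hb]
  · intro h; exact absurd (Finset.mem_univ i) h

lemma choi_channel {I O : Type} [Fintype I] [Fintype O] [DecidableEq I] [DecidableEq O]
    (C : Matrix (O × I) (O × I) ℂ) (hC : C.PosSemidef)
    (hTP : ∀ i j : I, ∑ o : O, C (o, i) (o, j) = if i = j then 1 else 0) :
    ∃ F : Matrix I I ℂ →ₗ[ℂ] Matrix O O ℂ, IsCPTPMap F ∧ choiFun ⇑F = C := by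
  let F0 : Matrix I I ℂ →ₗ[ℂ] Matrix O O ℂ :=
    { toFun := fun M => Matrix.of fun o o' => ∑ i, ∑ j, C (o, i) (o', j) * M i j
      map_add' := by
        intro M N
        ext o o'
        simp [Matrix.add_apply, mul_add, Finset.sum_add_distrib]
      map_smul' := by
        intro c M
        ext o o'
        simp only [Matrix.smul_apply, smul_eq_mul, RingHom.id_apply, Matrix.of_apply,
          Finset.mul_sum]
        exact Finset.sum_congr rfl fun i _ => Finset.sum_congr rfl fun j _ => by ring }
  have hF0 : ∀ (M : Matrix I I ℂ) (o o' : O), F0 M o o' = ∑ i, ∑ j, C (o, i) (o', j) * M i j :=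
    fun _ _ _ => rfl
  refine ⟨F0, ⟨?_, ?_⟩, ?_⟩
  · -- CP
    intro k M hM
    obtain ⟨g, hg⟩ := repr_of_psd hC
    obtain ⟨f, hf⟩ := repr_of_psd hM
    apply psd_of_repr _
      (fun (ts : (O × I) × (I × Fin k)) (p : O × Fin k) =>
        ∑ j, g ts.1 (p.1, j) * f ts.2 (j, p.2))
    intro p q
    have htd : tensorId (⇑F0) M p q
        = ∑ i, ∑ j, C (p.1, i) (q.1, j) * M (i, p.2) (j, q.2) := rfl
    rw [htd]
    have hstep1 : ∀ i j : I, C (p.1, i) (q.1, j) * M (i, p.2) (j, q.2)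
        = ∑ t : O × I, ∑ s : I × Fin k,
            (star (g t (p.1, i)) * g t (q.1, j)) * (star (f s (i, p.2)) * f s (j, q.2)) := by
      intro i j
      rw [hg, hf, Finset.sum_mul_sum]
    rw [Finset.sum_congr rfl fun i _ => Finset.sum_congr rfl fun j _ => hstep1 i j]
    have hstep2 : ∀ (ts : (O × I) × (I × Fin k)),
        star (∑ j, g ts.1 (p.1, j) * f ts.2 (j, p.2)) * (∑ j, g ts.1 (q.1, j) * f ts.2 (j, q.2))
        = ∑ i, ∑ j,
            (star (g ts.1 (p.1, i)) * g ts.1 (q.1, j)) * (star (f ts.2 (i, p.2)) * f ts.2 (j, q.2)) := by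
      intro ts
      rw [star_sum, Finset.sum_mul_sum]
      exact Finset.sum_congr rfl fun i _ => Finset.sum_congr rfl fun j _ => by
        rw [star_mul']; ring
    rw [Finset.sum_congr rfl fun ts _ => hstep2 ts]
    rw [Fintype.sum_prod_type]
    -- LHS : ∑ i ∑ j ∑ t ∑ s E = ∑ t ∑ s ∑ i ∑ j E
    calc ∑ i, ∑ j, ∑ t : O × I, ∑ s : I × Fin k,
            (star (g t (p.1, i)) * g t (q.1, j)) * (star (f s (i, p.2)) * f s (j, q.2))
        = ∑ i, ∑ t : O × I, ∑ j, ∑ s : I × Fin k,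
            (star (g t (p.1, i)) * g t (q.1, j)) * (star (f s (i, p.2)) * f s (j, q.2)) :=
          Finset.sum_congr rfl fun i _ => Finset.sum_comm
      _ = ∑ t : O × I, ∑ i, ∑ j, ∑ s : I × Fin k,
            (star (g t (p.1, i)) * g t (q.1, j)) * (star (f s (i, p.2)) * f s (j, q.2)) :=
          Finset.sum_comm
      _ = ∑ t : O × I, ∑ i, ∑ s : I × Fin k, ∑ j,
            (star (g t (p.1, i)) * g t (q.1, j)) * (star (f s (i, p.2)) * f s (j, q.2)) :=
          Finset.sum_congr rfl fun t _ => Finset.sum_congr rfl fun i _ => Finset.sum_comm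
      _ = ∑ t : O × I, ∑ s : I × Fin k, ∑ i, ∑ j,
            (star (g t (p.1, i)) * g t (q.1, j)) * (star (f s (i, p.2)) * f s (j, q.2)) :=
          Finset.sum_congr rfl fun t _ => Finset.sum_comm
  · -- TP
    intro M
    have h1 : (F0 M).trace = ∑ o, F0 M o o := rfl
    have h2 : M.trace = ∑ i, M i i := rfl
    rw [h1, h2]
    rw [Finset.sum_congr rfl fun o (_ : o ∈ Finset.univ) => hF0 M o o]
    rw [Finset.sum_comm]
    refine Finset.sum_congr rfl fun i _ => ?_
    rw [Finset.sum_comm]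
    have h3 : ∀ j, ∑ o, C (o, i) (o, j) * M i j = (if i = j then 1 else 0) * M i j := by
      intro j
      rw [← Finset.sum_mul, hTP]
    rw [Finset.sum_congr rfl fun j _ => h3 j]
    simp [ite_mul, zero_mul, one_mul, Finset.sum_ite_eq]
  · -- Choi
    ext ⟨o, i⟩ ⟨o', j⟩
    show choiFun (⇑F0) (o, i) (o', j) = C (o, i) (o', j)
    simp only [choiFun, Matrix.sum_apply, Matrix.kroneckerMap_apply, Matrix.single,
      Matrix.of_apply, ite_and, mul_ite, mul_one, mul_zero, ite_mul, zero_mul, one_mul, hF0]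
    simp only [sum_ite_eq_double₂]
    exact sum_ite_eq_double₁ (fun a b => C (o, a) (o', b)) i j

section Main

variable (N : ℕ) (H : ℕ → Type) [∀ i, Fintype (H i)] [∀ i, DecidableEq (H i)]
  (Rk : (k : ℕ) → Matrix (Sp H (2*k)) (Sp H (2*k)) ℂ)

/-- Ancilla dimensions. -/
def mA (k : ℕ) : ℕ := if k < N then (Rk k).rank else 1

/-- Ancilla types. -/
abbrev Anc (k : ℕ) : Type := Fin (mA N H Rk k)

instance ancF (k : ℕ) : Fintype (Anc N H Rk k) := inferInstanceAs (Fintype (Fin _))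
instance ancD (k : ℕ) : DecidableEq (Anc N H Rk k) := inferInstanceAs (DecidableEq (Fin _))

lemma mA_eq {k : ℕ} (h : k < N) : mA N H Rk k = (Rk k).rank := if_pos h

lemma mA_eq_one {k : ℕ} (h : ¬ k < N) : mA N H Rk k = 1 := if_neg h

lemma card_anc (k : ℕ) : Fintype.card (Anc N H Rk k) = mA N H Rk k :=
  (Fintype.card_congr (Equiv.cast rfl)).trans (Fintype.card_fin _)

/-- Cast from ancilla to the rank-index type. -/
def castA {k : ℕ} (h : k < N) (α : Anc N H Rk k) : Fin ((Rk k).rank) :=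
  Fin.cast (mA_eq N H Rk h) α

lemma castA_inj {k : ℕ} (h : k < N) {α α' : Anc N H Rk k} :
    castA N H Rk h α = castA N H Rk h α' ↔ α = α' := by
  constructor
  · intro hh
    have h1 := congrArg Fin.val hh
    exact Fin.ext h1
  · intro hh; rw [hh]

variable (T : (k : ℕ) → Matrix (Sp H (2*k)) (Fin ((Rk k).rank)) ℂ)

/-- `T (k+1)`, with its index type written as an explicit product. -/
def STk (k : ℕ) : Matrix ((Sp H (2*k) × H (2*k)) × H (2*k+1)) (Fin ((Rk (k+1)).rank)) ℂ :=
  fun u γ => T (k+1) u γ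

variable (T' : (k : ℕ) → Matrix (Fin ((Rk k).rank)) (Sp H (2*k)) ℂ)

/-- The isometry-like block of step `k`. -/
def VtM (k : ℕ) :
    Matrix ((Fin ((Rk k).rank) × H (2*k)) × H (2*k+1)) (Fin ((Rk (k+1)).rank)) ℂ :=
  extMap (X := H (2*k)) (Y := H (2*k+1)) (T' k) * STk H Rk T k

/-- Choi operators of the channels realizing the comb. -/
def ChanC (i : ℕ) :
    Matrix ((H (2*i+1) × Anc N H Rk (i+1)) × (H (2*i) × Anc N H Rk i))
           ((H (2*i+1) × Anc N H Rk (i+1)) × (H (2*i) × Anc N H Rk i)) ℂ :=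
  if h1 : i + 1 < N then
    fun p q =>
      VtM H Rk T T' i ((castA N H Rk (Nat.lt_of_succ_lt h1) p.2.2, p.2.1), p.1.1)
          (castA N H Rk h1 p.1.2) *
        star (VtM H Rk T T' i ((castA N H Rk (Nat.lt_of_succ_lt h1) q.2.2, q.2.1), q.1.1)
          (castA N H Rk h1 q.1.2))
  else if h2 : i < N then
    fun p q => ∑ γ : Fin ((Rk (i+1)).rank),
      VtM H Rk T T' i ((castA N H Rk h2 p.2.2, p.2.1), p.1.1) γ *
        star (VtM H Rk T T' i ((castA N H Rk h2 q.2.2, q.2.1), q.1.1) γ)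
  else 0

variable {N H Rk T T'}

/-- The key trace condition, in the form used by the step lemmas. -/
lemma htraceK (hTT : ∀ k, k ≤ N → Rk k = T k * (T k)ᴴ ∧ T' k * T k = 1)
    (hnorm : ∀ k, k < N → lastTrace (k := 2*k+1) (Rk (k+1)) = idExtend (Rk k))
    {k : ℕ} (hk : k < N) :
    ∀ (a b : Sp H (2*k)) (x x' : H (2*k)), ∑ y : H (2*k+1),
      (STk H Rk T k * (STk H Rk T k)ᴴ) ((a,x),y) ((b,x'),y)
      = (if x = x' then 1 else 0) * ((T k) * (T k)ᴴ) a b := by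
  intro a b x x'
  have h2 : Rk (k+1) = T (k+1) * (T (k+1))ᴴ := (hTT (k+1) hk).1
  have h3 : Rk k = T k * (T k)ᴴ := (hTT k (le_of_lt hk)).1
  have e1 : ∀ y : H (2*k+1),
      (STk H Rk T k * (STk H Rk T k)ᴴ) ((a,x),y) ((b,x'),y)
        = Rk (k+1) ((a,x),y) ((b,x'),y) :=
    fun y => (congrFun (congrFun h2 ((a,x),y)) ((b,x'),y)).symm
  rw [Finset.sum_congr rfl fun y _ => e1 y]
  calc ∑ y : H (2*k+1), Rk (k+1) ((a,x),y) ((b,x'),y)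
      = lastTrace (k := 2*k+1) (Rk (k+1)) (a,x) (b,x') := rfl
    _ = idExtend (Rk k) (a,x) (b,x') := by rw [hnorm k hk]
    _ = (if x = x' then 1 else 0) * Rk k a b := rfl
    _ = (if x = x' then 1 else 0) * ((T k) * (T k)ᴴ) a b := by
          exact congrArg (fun z => (if x = x' then (1:ℂ) else 0) * z)
            (congrFun (congrFun h3 a) b)

lemma sum_castA (hTT : ∀ k, k ≤ N → Rk k = T k * (T k)ᴴ ∧ T' k * T k = 1)
    (hnorm : ∀ k, k < N → lastTrace (k := 2*k+1) (Rk (k+1)) = idExtend (Rk k))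
    {k : ℕ} (hk : k < N) (c : Sp H (2*k)) (xx : H (2*k)) (yy : H (2*k+1))
    (γ : Fin ((Rk (k+1)).rank)) :
    ∑ α : Anc N H Rk k,
        T k c (castA N H Rk hk α) * VtM H Rk T T' k ((castA N H Rk hk α, xx), yy) γ
      = T (k+1) ((c, xx), yy) γ := by
  have h1 : (∑ α : Anc N H Rk k,
        T k c (castA N H Rk hk α) * VtM H Rk T T' k ((castA N H Rk hk α, xx), yy) γ)
      = ∑ s : Fin ((Rk k).rank), T k c s * VtM H Rk T T' k ((s, xx), yy) γ :=
    Fintype.sum_equiv ((finCongr (mA_eq N H Rk hk)) : Anc N H Rk k ≃ Fin ((Rk k).rank))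
      _ _ (fun α => rfl)
  rw [h1]
  exact step_key' (T k) (T' k) (STk H Rk T k) (hTT k (le_of_lt hk)).2
    (htraceK hTT hnorm hk) c xx yy γ

lemma chain_inv (hTT : ∀ k, k ≤ N → Rk k = T k * (T k)ᴴ ∧ T' k * T k = 1)
    (hnorm : ∀ k, k < N → lastTrace (k := 2*k+1) (Rk (k+1)) = idExtend (Rk k))
    (h0 : Rk 0 = 1) :
    ∀ (k : ℕ) (hk : k < N) (a b : Sp H (2*k)) (α α' : Anc N H Rk k),
      chain (ChanC N H Rk T T') k (a, α) (b, α')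
        = T k a (castA N H Rk hk α) * star (T k b (castA N H Rk hk α')) := by
  intro k
  induction k with
  | zero =>
    intro hk a b α α'
    haveI : Subsingleton (Sp H (2*0)) := inferInstanceAs (Subsingleton PUnit)
    have hcard : Fintype.card (Sp H (2*0)) = 1 :=
      Fintype.card_eq_one_iff.mpr ⟨a, fun y => Subsingleton.elim y a⟩
    have hr0 : (Rk 0).rank = 1 := by rw [h0, Matrix.rank_one, hcard]
    haveI hss : Subsingleton (Fin ((Rk 0).rank)) := by rw [hr0]; infer_instance
    have hch : chain (ChanC N H Rk T T') 0 (a, α) (b, α') = if α = α' then 1 else 0 := rfl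
    have hαα : α = α' := by
      apply Fin.ext
      have h1 : (α : ℕ) < mA N H Rk 0 := α.isLt
      have h2 : (α' : ℕ) < mA N H Rk 0 := α'.isLt
      have hm := mA_eq N H Rk hk
      omega
    have hab : a = b := Subsingleton.elim a b
    rw [hch, if_pos hαα, hαα, hab]
    have hsum : (T 0 * (T 0)ᴴ) b b
        = T 0 b (castA N H Rk hk α') * star (T 0 b (castA N H Rk hk α')) := by
      rw [Matrix.mul_apply]
      rw [Fintype.sum_eq_single (castA N H Rk hk α')
        (fun s hs => absurd (Subsingleton.elim s _) hs)]
      rw [Matrix.conjTranspose_apply]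
    have e := congrFun (congrFun (hTT 0 (Nat.zero_le N)).1 b) b
    have h1 : (T 0 * (T 0)ᴴ) b b = 1 := by
      rw [← e, h0, Matrix.one_apply_eq]
    rw [← hsum, h1]
  | succ k ih =>
    intro hk1 A B β β'
    obtain ⟨⟨a, x⟩, y⟩ := A
    obtain ⟨⟨b, x'⟩, y'⟩ := B
    have hk : k < N := Nat.lt_of_succ_lt hk1
    have hch : chain (ChanC N H Rk T T') (k+1) (((a,x),y), β) (((b,x'),y'), β')
        = ∑ α : Anc N H Rk k, ∑ α'' : Anc N H Rk k,
            chain (ChanC N H Rk T T') k (a, α) (b, α'') *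
              ChanC N H Rk T T' k ((y,β),(x,α)) ((y',β'),(x',α'')) := rfl
    rw [hch]
    have hterm : ∀ (α α'' : Anc N H Rk k),
        chain (ChanC N H Rk T T') k (a, α) (b, α'') *
            ChanC N H Rk T T' k ((y,β),(x,α)) ((y',β'),(x',α''))
        = (T k a (castA N H Rk hk α) *
             VtM H Rk T T' k ((castA N H Rk hk α, x), y) (castA N H Rk hk1 β)) *
          star (T k b (castA N H Rk hk α'') *
             VtM H Rk T T' k ((castA N H Rk hk α'', x'), y') (castA N H Rk hk1 β')) := by
      intro α α''
      rw [ih hk a b α α'']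
      rw [show ChanC N H Rk T T' k = _ from dif_pos hk1]
      dsimp only
      rw [star_mul']
      ring
    rw [Finset.sum_congr rfl fun α _ => Finset.sum_congr rfl fun α'' _ => hterm α α'']
    rw [← Finset.sum_mul_sum]
    rw [← star_sum]
    rw [sum_castA hTT hnorm hk a x y (castA N H Rk hk1 β),
      sum_castA hTT hnorm hk b x' y' (castA N H Rk hk1 β')]

lemma chain_link (hTT : ∀ k, k ≤ N → Rk k = T k * (T k)ᴴ ∧ T' k * T k = 1)
    (hnorm : ∀ k, k < N → lastTrace (k := 2*k+1) (Rk (k+1)) = idExtend (Rk k))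
    (h0 : Rk 0 = 1) :
    ∀ (a b : Sp H (2*N)) (β β' : Anc N H Rk N),
      chain (ChanC N H Rk T T') N (a, β) (b, β') = Rk N a b := by
  by_cases hN0 : N = 0
  · subst hN0
    intro a b β β'
    haveI : Subsingleton (Sp H (2*0)) := inferInstanceAs (Subsingleton PUnit)
    have hch : chain (ChanC 0 H Rk T T') 0 (a, β) (b, β') = if β = β' then 1 else 0 := rfl
    have hββ : β = β' := by
      apply Fin.ext
      have h1 : (β : ℕ) < mA 0 H Rk 0 := β.isLt
      have h2 : (β' : ℕ) < mA 0 H Rk 0 := β'.isLt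
      have hm := mA_eq_one 0 H Rk (lt_irrefl 0)
      omega
    rw [hch, if_pos hββ, h0]
    rw [Subsingleton.elim a b, Matrix.one_apply_eq]
  · obtain ⟨M, rfl⟩ := Nat.exists_eq_succ_of_ne_zero hN0
    intro A B β β'
    obtain ⟨⟨a, x⟩, y⟩ := A
    obtain ⟨⟨b, x'⟩, y'⟩ := B
    have hk : M < M + 1 := Nat.lt_succ_self M
    have hnot : ¬ (M + 1 < M + 1) := lt_irrefl _
    have hch : chain (ChanC (M+1) H Rk T T') (M+1) (((a,x),y), β) (((b,x'),y'), β')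
        = ∑ α : Anc (M+1) H Rk M, ∑ α'' : Anc (M+1) H Rk M,
            chain (ChanC (M+1) H Rk T T') M (a, α) (b, α'') *
              ChanC (M+1) H Rk T T' M ((y,β),(x,α)) ((y',β'),(x',α'')) := rfl
    rw [hch]
    have hterm : ∀ (α α'' : Anc (M+1) H Rk M),
        chain (ChanC (M+1) H Rk T T') M (a, α) (b, α'') *
            ChanC (M+1) H Rk T T' M ((y,β),(x,α)) ((y',β'),(x',α''))
        = ∑ γ : Fin ((Rk (M+1)).rank),
            (T M a (castA (M+1) H Rk hk α) *
               VtM H Rk T T' M ((castA (M+1) H Rk hk α, x), y) γ) *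
            star (T M b (castA (M+1) H Rk hk α'') *
               VtM H Rk T T' M ((castA (M+1) H Rk hk α'', x'), y') γ) := by
      intro α α''
      rw [chain_inv hTT hnorm h0 M hk a b α α'']
      rw [show ChanC (M+1) H Rk T T' M = _ from (dif_neg hnot).trans (dif_pos hk)]
      dsimp only
      rw [Finset.mul_sum]
      exact Finset.sum_congr rfl fun γ _ => by rw [star_mul']; ring
    rw [Finset.sum_congr rfl fun α _ => Finset.sum_congr rfl fun α'' _ => hterm α α'']
    rw [Finset.sum_congr rfl fun α _ => Finset.sum_comm]
    rw [Finset.sum_comm]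
    have hγ : ∀ γ : Fin ((Rk (M+1)).rank),
        ∑ α : Anc (M+1) H Rk M, ∑ α'' : Anc (M+1) H Rk M,
          (T M a (castA (M+1) H Rk hk α) *
             VtM H Rk T T' M ((castA (M+1) H Rk hk α, x), y) γ) *
          star (T M b (castA (M+1) H Rk hk α'') *
             VtM H Rk T T' M ((castA (M+1) H Rk hk α'', x'), y') γ)
        = T (M+1) ((a,x),y) γ * star (T (M+1) ((b,x'),y') γ) := by
      intro γ
      rw [← Finset.sum_mul_sum]
      rw [← star_sum]
      rw [sum_castA hTT hnorm hk a x y γ, sum_castA hTT hnorm hk b x' y' γ]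
    rw [Finset.sum_congr rfl fun γ _ => hγ γ]
    have hR := (hTT (M+1) (le_refl _)).1
    rw [congrFun (congrFun hR ((a,x),y)) ((b,x'),y')]
    exact (Matrix.mul_apply (M := T (M+1)) (N := (T (M+1))ᴴ)).symm

lemma ite_prod {X A : Type} [DecidableEq X] [DecidableEq A] (x x' : X) (α α' : A) :
    ((if x = x' then (1:ℂ) else 0) * (if α = α' then 1 else 0))
      = if (x, α) = (x', α') then 1 else 0 := by
  by_cases h1 : x = x' <;> by_cases h2 : α = α' <;> simp [h1, h2, Prod.ext_iff]

lemma chanC_psd (N : ℕ) (i : ℕ) : (ChanC N H Rk T T' i).PosSemidef := by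
  by_cases h1 : i + 1 < N
  · apply psd_of_repr _ (fun (_ : Fin 1) p =>
      star (VtM H Rk T T' i ((castA N H Rk (Nat.lt_of_succ_lt h1) p.2.2, p.2.1), p.1.1)
        (castA N H Rk h1 p.1.2)))
    intro u v
    rw [show ChanC N H Rk T T' i = _ from dif_pos h1]
    dsimp only
    rw [Fin.sum_univ_one]
    rw [star_star]
  · by_cases h2 : i < N
    · apply psd_of_repr _ (fun (γ : Fin ((Rk (i+1)).rank)) p =>
        star (VtM H Rk T T' i ((castA N H Rk h2 p.2.2, p.2.1), p.1.1) γ))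
      intro u v
      rw [show ChanC N H Rk T T' i = _ from (dif_neg h1).trans (dif_pos h2)]
      dsimp only
      exact Finset.sum_congr rfl fun γ _ => by rw [star_star]
    · rw [show ChanC N H Rk T T' i = 0 from (dif_neg h1).trans (dif_neg h2)]
      exact Matrix.PosSemidef.zero

lemma chanC_tp (hTT : ∀ k, k ≤ N → Rk k = T k * (T k)ᴴ ∧ T' k * T k = 1)
    (hnorm : ∀ k, k < N → lastTrace (k := 2*k+1) (Rk (k+1)) = idExtend (Rk k))
    (i : ℕ) (hi : i < N) :
    ∀ u v : H (2*i) × Anc N H Rk i,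
      (∑ o : H (2*i+1) × Anc N H Rk (i+1), ChanC N H Rk T T' i (o, u) (o, v))
        = if u = v then 1 else 0 := by
  rintro ⟨x, α⟩ ⟨x', α'⟩
  have hTk := (hTT i (le_of_lt hi)).2
  have htr := htraceK hTT hnorm hi
  by_cases h1 : i + 1 < N
  · rw [show ChanC N H Rk T T' i = _ from dif_pos h1]
    dsimp only
    rw [Fintype.sum_prod_type]
    have hre : ∀ y : H (2*i+1),
        (∑ β : Anc N H Rk (i+1),
          VtM H Rk T T' i ((castA N H Rk (Nat.lt_of_succ_lt h1) α, x), y)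
              (castA N H Rk h1 β) *
            star (VtM H Rk T T' i ((castA N H Rk (Nat.lt_of_succ_lt h1) α', x'), y)
              (castA N H Rk h1 β)))
        = ∑ γ : Fin ((Rk (i+1)).rank),
            VtM H Rk T T' i ((castA N H Rk (Nat.lt_of_succ_lt h1) α, x), y) γ *
              star (VtM H Rk T T' i ((castA N H Rk (Nat.lt_of_succ_lt h1) α', x'), y) γ) :=
      fun y => Fintype.sum_equiv
        ((finCongr (mA_eq N H Rk h1)) : Anc N H Rk (i+1) ≃ Fin ((Rk (i+1)).rank))
        _ _ (fun β => rfl)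
    rw [Finset.sum_congr rfl fun y _ => hre y]
    have hstep := step_tp (T i) (T' i) (STk H Rk T i) hTk htr
      (castA N H Rk (Nat.lt_of_succ_lt h1) α) (castA N H Rk (Nat.lt_of_succ_lt h1) α') x x'
    simp only [VtM]
    rw [hstep]
    simp only [castA_inj]
    exact ite_prod x x' α α'
  · rw [show ChanC N H Rk T T' i = _ from (dif_neg h1).trans (dif_pos hi)]
    dsimp only
    rw [Fintype.sum_prod_type]
    have hconst : ∀ y : H (2*i+1),
        (∑ _β : Anc N H Rk (i+1),
          ∑ γ : Fin ((Rk (i+1)).rank),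
            VtM H Rk T T' i ((castA N H Rk hi α, x), y) γ *
              star (VtM H Rk T T' i ((castA N H Rk hi α', x'), y) γ))
        = ∑ γ : Fin ((Rk (i+1)).rank),
            VtM H Rk T T' i ((castA N H Rk hi α, x), y) γ *
              star (VtM H Rk T T' i ((castA N H Rk hi α', x'), y) γ) := by
      intro y
      rw [Finset.sum_const, Finset.card_univ, card_anc, mA_eq_one N H Rk (by omega), one_smul]
    rw [Finset.sum_congr rfl fun y _ => hconst y]
    simp only [VtM]
    rw [step_tp (T i) (T' i) (STk H Rk T i) hTk htr
      (castA N H Rk hi α) (castA N H Rk hi α') x x']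
    simp only [castA_inj]
    exact ite_prod x x' α α'

def uniqueFinOfEqOne {n : ℕ} (h : n = 1) : Unique (Fin n) := by
  subst h
  infer_instance

end Main
end Stmt7Aux

/-- every deterministic `N`-comb `R`, with comb normalization
hierarchy `Rk`, admits a realization by quantum channels in which the ancilla
(quantum memory) used between step `k` and step `k+1` has dimension exactly
`rank (Rk k)`, for every `k = 1, …, N-1`. -/
theorem stmt7 (N : ℕ) (H : ℕ → Type) [∀ i, Fintype (H i)] [∀ i, DecidableEq (H i)]
    (R : Matrix (Sp H (2*N)) (Sp H (2*N)) ℂ)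
    (Rk : (k : ℕ) → Matrix (Sp H (2*k)) (Sp H (2*k)) ℂ)
    (hN : Rk N = R) (h0 : Rk 0 = 1)
    (hpos : ∀ k, k ≤ N → (Rk k).PosSemidef)
    (hnorm : ∀ k, k < N → lastTrace (k := 2*k+1) (Rk (k+1)) = idExtend (Rk k)) :
    ∃ r : Realization N H R,
      ∀ k, 1 ≤ k → k ≤ N - 1 → @Fintype.card (r.A k) (r.instF k) = (Rk k).rank := by
  classical
  have hex : ∀ k : ℕ, ∃ (Tk : Matrix (Sp H (2*k)) (Fin ((Rk k).rank)) ℂ)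
      (Tk' : Matrix (Fin ((Rk k).rank)) (Sp H (2*k)) ℂ),
      k ≤ N → (Rk k = Tk * Tk.conjTranspose ∧ Tk' * Tk = 1) := by
    intro k
    by_cases hk : k ≤ N
    · obtain ⟨Tk, Tk', h1, h2⟩ := Stmt7Aux.exists_rank_factor (hpos k hk)
      exact ⟨Tk, Tk', fun _ => ⟨h1, h2⟩⟩
    · exact ⟨0, 0, fun h => absurd h hk⟩
  choose T T' hTT using hex
  have hm0 : Stmt7Aux.mA N H Rk 0 = 1 := by
    by_cases hN0 : 0 < N
    · rw [Stmt7Aux.mA_eq N H Rk hN0, h0, Matrix.rank_one]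
      haveI : Subsingleton (Sp H (2*0)) := inferInstanceAs (Subsingleton PUnit)
      exact Fintype.card_eq_one_iff.mpr ⟨(show Sp H (2*0) from PUnit.unit),
        fun y => Subsingleton.elim y _⟩
    · exact Stmt7Aux.mA_eq_one N H Rk hN0
  have hmN : Stmt7Aux.mA N H Rk N = 1 := Stmt7Aux.mA_eq_one N H Rk (lt_irrefl N)
  refine ⟨{ A := fun k => Stmt7Aux.Anc N H Rk k,
            instF := fun k => Stmt7Aux.ancF N H Rk k,
            instD := fun k => Stmt7Aux.ancD N H Rk k,
            h0 := Stmt7Aux.uniqueFinOfEqOne hm0,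
            hN := Stmt7Aux.uniqueFinOfEqOne hmN,
            C := Stmt7Aux.ChanC N H Rk T T',
            hchan := ?_,
            hlink := ?_ }, ?_⟩
  · intro i hi
    exact Stmt7Aux.choi_channel _ (Stmt7Aux.chanC_psd N i) (Stmt7Aux.chanC_tp hTT hnorm i hi)
  · intro a b β β'
    rw [← hN]
    exact Stmt7Aux.chain_link hTT hnorm h0 a b β β'
  · intro k hk1 hk2
    have hkN : k < N := by omega
    exact (Stmt7Aux.card_anc N H Rk k).trans (Stmt7Aux.mA_eq N H Rk hkN)

end
end

section
/- Let 𝒞 : Matrix n n ℂ → Matrix m m ℂ be a quantum channel and d ∈ ℕ. Then there exist a finite index set I, completely positive maps ℰ_i : Matrix n n ℂ → Matrix d d ℂ (i ∈ I) such that Σ_{i ∈ I} ℰ_i is trace preserving, and quantum channels 𝒟_i : Matrix d d ℂ → Matrix m m ℂ with 𝒞 = Σ_{i ∈ I} 𝒟_i ∘ ℰ_i, if and only if the Choi operator of 𝒞 admits a decomposition C = Σ_j |K_j⟩⟩⟨⟨K_j| with matrices K_j ∈ Matrix m n ℂ satisfying rank(K_j) ≤ d for all j. -/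
open ComplexOrder

noncomputable section

open scoped Matrix

section Aux

variable {I O : Type} [Fintype I] [DecidableEq I] [Fintype O] [DecidableEq O]

lemma choiFun_apply (F : Matrix I I ℂ → Matrix O O ℂ) (p q : O) (k l : I) :
    choiFun F (p, k) (q, l) = F (Matrix.single k l (1 : ℂ)) p q := by
  unfold choiFun
  simp only [Finset.sum_apply, Matrix.sum_apply, Matrix.kroneckerMap_apply,
    Matrix.single, Matrix.of_apply]
  rw [Finset.sum_eq_single k]
  · rw [Finset.sum_eq_single l] <;> simp_all
  · intro b _ hb
    rw [Finset.sum_eq_zero]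
    intro c _
    simp [hb]
  · simp

/-- kraus linear map -/
def krausLM {ι : Type} [Fintype ι] (K : ι → Matrix O I ℂ) :
    Matrix I I ℂ →ₗ[ℂ] Matrix O O ℂ where
  toFun M := ∑ a, K a * M * (K a)ᴴ
  map_add' M N := by simp [Matrix.mul_add, Matrix.add_mul, Finset.sum_add_distrib]
  map_smul' c M := by simp [Finset.smul_sum]

@[simp] lemma krausLM_apply {ι : Type} [Fintype ι] (K : ι → Matrix O I ℂ)
    (M : Matrix I I ℂ) : krausLM K M = ∑ a, K a * M * (K a)ᴴ := rfl

lemma mul_std_apply (K : Matrix O I ℂ) (k l : I) (p : O) (j : I) :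
    (K * Matrix.single k l (1 : ℂ)) p j = if l = j then K p k else 0 := by
  simp [Matrix.mul_apply, Matrix.single, ite_and, Finset.sum_ite_eq]

lemma kraus_std (K : Matrix O I ℂ) (k l : I) (p q : O) :
    (K * Matrix.single k l (1 : ℂ) * Kᴴ) p q = K p k * star (K q l) := by
  rw [Matrix.mul_apply]
  simp [mul_std_apply, ite_mul, Finset.sum_ite_eq, Matrix.conjTranspose_apply]

lemma choiFun_kraus {ι : Type} [Fintype ι] (F : Matrix I I ℂ → Matrix O O ℂ)
    (K : ι → Matrix O I ℂ) (hF : ∀ M, F M = ∑ a, K a * M * (K a)ᴴ) :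
    choiFun F = ∑ a, dyadM (K a) := by
  ext ⟨p, k⟩ ⟨q, l⟩
  rw [choiFun_apply, hF]
  simp only [Matrix.sum_apply, dyadM]
  exact Finset.sum_congr rfl fun a _ => kraus_std _ _ _ _ _

lemma dyadM_posSemidef {K : Matrix O I ℂ} : (dyadM K).PosSemidef := by
  refine Matrix.posSemidef_iff_dotProduct_mulVec.mpr ⟨?_, ?_⟩
  · ext ⟨p, k⟩ ⟨q, l⟩
    simp [dyadM, Matrix.conjTranspose_apply, mul_comm]
  · intro x
    have : dotProduct (star x) (dyadM K *ᵥ x)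
        = star (∑ q : O × I, star (K q.1 q.2) * x q) * (∑ q : O × I, star (K q.1 q.2) * x q) := by
      simp only [dotProduct, Matrix.mulVec, Pi.star_apply, dyadM, star_sum, star_mul,
        star_star, Finset.sum_mul, Finset.mul_sum]
      rw [Finset.sum_comm]
      refine Finset.sum_congr rfl fun p _ => Finset.sum_congr rfl fun q _ => ?_
      ring
    rw [this]
    exact star_mul_self_nonneg _

lemma psd_sum {X ι : Type} [Fintype X] (s : Finset ι) (f : ι → Matrix X X ℂ)
    (h : ∀ a ∈ s, (f a).PosSemidef) : (∑ a ∈ s, f a).PosSemidef := by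
  classical
  induction s using Finset.induction_on with
  | empty => simpa using Matrix.PosSemidef.zero
  | insert _ _ hx ih =>
    rw [Finset.sum_insert hx]
    exact (h _ (Finset.mem_insert_self _ _)).add
      (ih fun a ha => h a (Finset.mem_insert_of_mem ha))

lemma tensor_kraus {k : ℕ} {ι : Type} [Fintype ι] (K : ι → Matrix O I ℂ)
    (F : Matrix I I ℂ → Matrix O O ℂ) (hF : ∀ M, F M = ∑ a, K a * M * (K a)ᴴ)
    (M : Matrix (I × Fin k) (I × Fin k) ℂ) :
    tensorId F M = ∑ a, (Matrix.kroneckerMap (· * ·) (K a) (1 : Matrix (Fin k) (Fin k) ℂ)) * M *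
      (Matrix.kroneckerMap (· * ·) (K a) (1 : Matrix (Fin k) (Fin k) ℂ))ᴴ := by
  ext ⟨p,x⟩ ⟨q,y⟩
  show F (Matrix.of fun i j => M (i,x) (j,y)) p q = _
  rw [hF]
  simp only [Matrix.sum_apply]
  refine Finset.sum_congr rfl fun a _ => ?_
  simp only [Matrix.mul_apply, Matrix.conjTranspose_apply, Matrix.kroneckerMap_apply,
    Fintype.sum_prod_type, Matrix.one_apply, Matrix.of_apply, mul_ite, ite_mul, mul_one, mul_zero, zero_mul,
    one_mul, star_mul', Finset.sum_ite_eq, Finset.sum_ite_eq', Finset.mem_univ, if_true,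
    apply_ite star, star_one, star_zero]

lemma isCPMap_of_kraus {ι : Type} [Fintype ι] (K : ι → Matrix O I ℂ)
    (F : Matrix I I ℂ →ₗ[ℂ] Matrix O O ℂ) (hF : ∀ M, F M = ∑ a, K a * M * (K a)ᴴ) :
    IsCPMap F := by
  intro k M hM
  rw [tensor_kraus K (⇑F) hF M]
  exact psd_sum _ _ fun a _ => hM.mul_mul_conjTranspose_same _

lemma trace_kraus {ι : Type} [Fintype ι] (K : ι → Matrix O I ℂ)
    (h1 : ∑ a, (K a)ᴴ * K a = 1) (M : Matrix I I ℂ) :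
    (∑ a, K a * M * (K a)ᴴ).trace = M.trace := by
  rw [Matrix.trace_sum]
  calc ∑ a, (K a * M * (K a)ᴴ).trace = ∑ a, ((K a)ᴴ * K a * M).trace := by
        refine Finset.sum_congr rfl fun a _ => ?_
        rw [Matrix.trace_mul_cycle, Matrix.mul_assoc]
    _ = M.trace := by
        rw [← Matrix.trace_sum, ← Finset.sum_mul, h1, Matrix.one_mul]

lemma mul_mul_conjT_apply {K : Matrix O I ℂ} {M : Matrix I I ℂ} (p q : O) :
    (K * M * Kᴴ) p q = ∑ k : I, ∑ l : I, M k l * (K p k * star (K q l)) := by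
  simp only [Matrix.mul_apply, Matrix.conjTranspose_apply, Finset.sum_mul]
  rw [Finset.sum_comm]
  exact Finset.sum_congr rfl fun k _ => Finset.sum_congr rfl fun l _ => by ring

lemma map_eq_kraus_of_choi {ι : Type} [Fintype ι]
    (F : Matrix I I ℂ →ₗ[ℂ] Matrix O O ℂ) (K : ι → Matrix O I ℂ)
    (h : choiFun ⇑F = ∑ j, dyadM (K j)) :
    ∀ M, F M = ∑ j, K j * M * (K j)ᴴ := by
  intro M
  have hM : F M = ∑ k : I, ∑ l : I, M k l • F (Matrix.single k l (1:ℂ)) := by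
    conv_lhs => rw [Matrix.matrix_eq_sum_single M]
    rw [map_sum]
    refine Finset.sum_congr rfl fun k _ => ?_
    rw [map_sum]
    refine Finset.sum_congr rfl fun l _ => ?_
    have : Matrix.single k l (M k l) = M k l • Matrix.single k l (1:ℂ) := by
      rw [Matrix.smul_single, smul_eq_mul, mul_one]
    rw [this, map_smul]
  have hstd : ∀ (k l : I) (p q : O), F (Matrix.single k l (1:ℂ)) p q
      = ∑ j, K j p k * star (K j q l) := by
    intro k l p q
    rw [show F (Matrix.single k l (1:ℂ)) p q = choiFun (⇑F) (p, k) (q, l) from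
      (choiFun_apply (⇑F) p q k l).symm, h]
    simp [Matrix.sum_apply, dyadM]
  ext p q
  rw [hM]
  simp only [Matrix.sum_apply, Matrix.smul_apply, smul_eq_mul, hstd, Finset.mul_sum,
    mul_mul_conjT_apply]
  calc ∑ k : I, ∑ l : I, ∑ j : ι, M k l * (K j p k * star (K j q l))
      = ∑ k : I, ∑ j : ι, ∑ l : I, M k l * (K j p k * star (K j q l)) :=
        Finset.sum_congr rfl fun k _ => Finset.sum_comm
    _ = ∑ j : ι, ∑ k : I, ∑ l : I, M k l * (K j p k * star (K j q l)) := Finset.sum_comm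

lemma choi_posSemidef {n : ℕ} (F : Matrix (Fin n) (Fin n) ℂ →ₗ[ℂ] Matrix O O ℂ)
    (hF : IsCPMap F) : (choiFun ⇑F).PosSemidef := by
  have he : choiFun ⇑F = tensorId ⇑F (dyadM (1 : Matrix (Fin n) (Fin n) ℂ)) := by
    ext ⟨p, k⟩ ⟨q, l⟩
    have harg : (fun i j => dyadM (1 : Matrix (Fin n) (Fin n) ℂ) (i, k) (j, l))
        = Matrix.single k l (1:ℂ) := by
      funext i j
      simp only [dyadM, Matrix.one_apply, Matrix.single, Matrix.of_apply]
      by_cases h1 : k = i <;> by_cases h2 : l = j <;> simp [h1, h2, eq_comm]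
    rw [choiFun_apply]
    show _ = F (fun i j => dyadM (1 : Matrix (Fin n) (Fin n) ℂ) (i, k) (j, l)) p q
    rw [harg]
  rw [he]
  exact hF n _ dyadM_posSemidef

open scoped MatrixOrder in
lemma kraus_of_choi_psd (F : Matrix I I ℂ →ₗ[ℂ] Matrix O O ℂ)
    (h : (choiFun ⇑F).PosSemidef) :
    ∃ K : (O × I) → Matrix O I ℂ, ∀ M, F M = ∑ a, K a * M * (K a)ᴴ := by
  obtain ⟨B, hB⟩ := CStarAlgebra.nonneg_iff_eq_star_mul_self.mp h.nonneg
  rw [Matrix.star_eq_conjTranspose] at hB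
  refine ⟨fun a => fun p i => star (B a (p, i)), map_eq_kraus_of_choi F _ ?_⟩
  rw [hB]
  ext ⟨p, k⟩ ⟨q, l⟩
  simp only [Matrix.mul_apply, Matrix.conjTranspose_apply, Matrix.sum_apply, dyadM, star_star]

end Aux

section Fact

lemma exists_factor {m n d : ℕ} (K : Matrix (Fin m) (Fin n) ℂ) (h : K.rank ≤ d) :
    ∃ (B : Matrix (Fin m) (Fin d) ℂ) (A : Matrix (Fin d) (Fin n) ℂ), K = B * A := by
  set S := LinearMap.range K.mulVecLin with hS
  have hr : Module.finrank ℂ S ≤ d := h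
  let b : Module.Basis (Fin (Module.finrank ℂ S)) ℂ S := Module.finBasis ℂ S
  set r := Module.finrank ℂ S
  let B' : Matrix (Fin m) (Fin r) ℂ := fun p a => (b a : Fin m → ℂ) p
  let A' : Matrix (Fin r) (Fin n) ℂ := fun a j =>
    b.repr ⟨K *ᵥ Pi.single j 1, LinearMap.mem_range_self _ _⟩ a
  have hK : K = B' * A' := by
    ext p j
    set x : S := ⟨K *ᵥ Pi.single j 1, LinearMap.mem_range_self _ _⟩ with hx
    have h1 : (x : Fin m → ℂ) p = K p j := by
      simp [hx, Matrix.mulVec_single]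
    have h2 := b.sum_repr x
    have h3 := congrFun (congrArg Subtype.val h2) p
    rw [← h1, ← h3]
    rw [Matrix.mul_apply]
    rw [show ((↑(∑ i : Fin r, b.repr x i • b i) : Fin m → ℂ)) p
      = ∑ i : Fin r, b.repr x i * (b i : Fin m → ℂ) p from by
        rw [Submodule.coe_sum]
        simp [Finset.sum_apply]]
    exact Finset.sum_congr rfl fun a _ => mul_comm _ _
  let J : Matrix (Fin r) (Fin d) ℂ := fun a c => if Fin.castLE hr a = c then 1 else 0
  have hJ : J * Jᵀ = 1 := by
    ext a a'
    rw [Matrix.mul_apply]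
    simp only [J, Matrix.transpose_apply, ite_mul, one_mul, zero_mul, Finset.sum_ite_eq,
      Finset.mem_univ, if_true]
    by_cases hh : a = a'
    · simp [hh, Matrix.one_apply]; exact if_pos rfl
    · have : ¬ (Fin.castLE hr a = Fin.castLE hr a') := by
        simpa [Fin.castLE_inj] using hh
      simp only [this, if_false, Matrix.one_apply, hh]
      exact if_neg (fun hc => hh (Fin.castLE_inj.mp hc).symm)
  refine ⟨B' * J, Jᵀ * A', ?_⟩
  rw [Matrix.mul_assoc, ← Matrix.mul_assoc J, hJ, Matrix.one_mul, hK]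

lemma exists_nice_factor {m n d : ℕ} (K : Matrix (Fin m) (Fin n) ℂ) (h : K.rank ≤ d) :
    ∃ (B : Matrix (Fin m) (Fin d) ℂ) (A : Matrix (Fin d) (Fin n) ℂ),
      K = B * A ∧ (1 - Bᴴ * B) * A = 0 ∧
      (1 - Bᴴ * B)ᴴ * (1 - Bᴴ * B) = 1 - Bᴴ * B := by
  obtain ⟨B₀, A₀, hK₀⟩ := exists_factor K h
  have hG : (B₀ᴴ * B₀).PosSemidef := Matrix.posSemidef_conjTranspose_mul_self B₀
  have hH : (B₀ᴴ * B₀).IsHermitian := hG.1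
  set U : Matrix (Fin d) (Fin d) ℂ := (Matrix.IsHermitian.eigenvectorUnitary hH :
    Matrix (Fin d) (Fin d) ℂ) with hUdef
  have hU1 : Uᴴ * U = 1 := by
    rw [← Matrix.star_eq_conjTranspose]
    exact Matrix.mem_unitaryGroup_iff'.mp (Matrix.IsHermitian.eigenvectorUnitary hH).2
  have hU2 : U * Uᴴ = 1 := by
    rw [← Matrix.star_eq_conjTranspose]
    exact Matrix.mem_unitaryGroup_iff.mp (Matrix.IsHermitian.eigenvectorUnitary hH).2
  set Dg : (Fin d → ℂ) → Matrix (Fin d) (Fin d) ℂ :=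
    fun c => U * Matrix.diagonal c * Uᴴ with hDgdef
  have hDgmul : ∀ c c', Dg c * Dg c' = Dg (fun i => c i * c' i) := by
    intro c c'
    simp only [hDgdef, Matrix.mul_assoc]
    rw [← Matrix.mul_assoc Uᴴ U, hU1, Matrix.one_mul,
      ← Matrix.mul_assoc (Matrix.diagonal c), Matrix.diagonal_mul_diagonal]
  have hDgH : ∀ c, (∀ i, star (c i) = c i) → (Dg c)ᴴ = Dg c := by
    intro c hc
    simp only [hDgdef, Matrix.conjTranspose_mul, Matrix.conjTranspose_conjTranspose,
      Matrix.diagonal_conjTranspose]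
    rw [show star c = c from funext hc, Matrix.mul_assoc]
  have hDg1 : Dg (fun _ => 1) = 1 := by
    simp only [hDgdef, Matrix.diagonal_one, Matrix.mul_one, hU2]
  have hDg0 : Dg (fun _ => 0) = 0 := by
    simp only [hDgdef, Matrix.diagonal_zero, Matrix.mul_zero, Matrix.zero_mul]
  have hDgsub : ∀ c c', Dg c - Dg c' = Dg (fun i => c i - c' i) := by
    intro c c'
    simp only [hDgdef, ← Matrix.diagonal_sub, Matrix.mul_sub, Matrix.sub_mul]
  -- eigenvalues and scalar functions
  set lam : Fin d → ℝ := hH.eigenvalues with hlamdef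
  have hlam0 : ∀ i, 0 ≤ lam i := fun i => hG.eigenvalues_nonneg i
  set g : Fin d → ℂ := fun i => ((Real.sqrt (lam i) : ℝ) : ℂ) with hgdef
  set gi : Fin d → ℂ := fun i => if lam i = 0 then 0 else ((Real.sqrt (lam i) : ℝ) : ℂ)⁻¹
    with hgidef
  set ind : Fin d → ℂ := fun i => if lam i = 0 then 0 else 1 with hinddef
  have hsqrt_ne : ∀ i, lam i ≠ 0 → ((Real.sqrt (lam i) : ℝ) : ℂ) ≠ 0 := by
    intro i hi
    simp only [ne_eq, Complex.ofReal_eq_zero]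
    exact Real.sqrt_ne_zero'.mpr (lt_of_le_of_ne (hlam0 i) (Ne.symm hi))
  have hid1 : ∀ i, gi i * (lam i : ℂ) * gi i = ind i := by
    intro i
    by_cases hi : lam i = 0
    · simp [hgidef, hinddef, hi]
    · simp only [hgidef, hinddef, hi, ite_false]
      have hs := hsqrt_ne i hi
      have hss : ((Real.sqrt (lam i) : ℝ) : ℂ) * ((Real.sqrt (lam i) : ℝ) : ℂ) = (lam i : ℂ) := by
        rw [← Complex.ofReal_mul, Real.mul_self_sqrt (hlam0 i)]
      rw [show ((Real.sqrt (lam i) : ℝ) : ℂ)⁻¹ * (lam i : ℂ) * ((Real.sqrt (lam i) : ℝ) : ℂ)⁻¹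
        = (lam i : ℂ) / (((Real.sqrt (lam i) : ℝ) : ℂ) * ((Real.sqrt (lam i) : ℝ) : ℂ)) from by
          field_simp, hss, div_self (Complex.ofReal_ne_zero.mpr hi)]
  have hid2 : ∀ i, gi i * g i = ind i := by
    intro i
    by_cases hi : lam i = 0
    · simp [hgidef, hgdef, hinddef, hi]
    · simp only [hgidef, hgdef, hinddef, hi, ite_false]
      exact inv_mul_cancel₀ (hsqrt_ne i hi)
  have hid3 : ∀ i, ind i * g i = g i := by
    intro i
    by_cases hi : lam i = 0
    · simp [hgdef, hinddef, hi]
    · simp [hinddef, hi]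
  -- spectral theorem
  have hspec : B₀ᴴ * B₀ = Dg (fun i => (lam i : ℂ)) := by
    have := hH.spectral_theorem
    simp only [Unitary.conjStarAlgAut_apply, Unitary.coe_star, Matrix.star_eq_conjTranspose] at this
    convert this using 2
    rfl
  set Pi' : Matrix (Fin d) (Fin d) ℂ := Dg ind with hPidef
  set B : Matrix (Fin m) (Fin d) ℂ := B₀ * Dg gi with hBdef
  set A : Matrix (Fin d) (Fin n) ℂ := Dg g * A₀ with hAdef
  have hstar_gi : ∀ i, star (gi i) = gi i := by
    intro i
    by_cases hi : lam i = 0 <;> simp [hgidef, hi, ← Complex.ofReal_inv, Complex.conj_ofReal]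
  have hstar_ind : ∀ i, star (ind i) = ind i := by
    intro i
    by_cases hi : lam i = 0 <;> simp [hinddef, hi]
  have hone : (1 : Matrix (Fin d) (Fin d) ℂ) - Pi' = Dg (fun i => 1 - ind i) := by
    rw [hPidef, ← hDg1, hDgsub]
  -- B₀ * Pi' = B₀
  have hBPi : B₀ * Pi' = B₀ := by
    have hz : (B₀ * (1 - Pi'))ᴴ * (B₀ * (1 - Pi')) = 0 := by
      rw [hone, Matrix.conjTranspose_mul, Matrix.mul_assoc, ← Matrix.mul_assoc B₀ᴴ B₀,
        hspec, hDgH _ (fun i => by rw [star_sub, star_one, hstar_ind]), hDgmul, hDgmul]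
      rw [show (fun i => (1 - ind i) * ((lam i : ℂ) * (1 - ind i))) =
        (fun _ : Fin d => (0:ℂ)) from by
          funext i; by_cases hi : lam i = 0 <;> simp [hinddef, hi], hDg0]
    have hz2 := Matrix.conjTranspose_mul_self_eq_zero.mp hz
    rw [Matrix.mul_sub, Matrix.mul_one, sub_eq_zero] at hz2
    exact hz2.symm
  have hBB : Bᴴ * B = Pi' := by
    rw [hBdef, Matrix.conjTranspose_mul, hDgH gi hstar_gi, Matrix.mul_assoc,
      ← Matrix.mul_assoc B₀ᴴ B₀, hspec, ← Matrix.mul_assoc, hDgmul, hDgmul]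
    rw [hPidef]
    refine congrArg Dg (funext fun i => ?_)
    linear_combination hid1 i
  have hKBA : K = B * A := by
    rw [hBdef, hAdef, Matrix.mul_assoc, ← Matrix.mul_assoc (Dg gi) (Dg g), hDgmul]
    rw [show (fun i => gi i * g i) = ind from funext hid2, ← hPidef, ← Matrix.mul_assoc, hBPi,
      hK₀]
  refine ⟨B, A, hKBA, ?_, ?_⟩
  · rw [hBB, hone, hAdef, ← Matrix.mul_assoc, hDgmul]
    rw [show (fun i => (1 - ind i) * g i) = (fun _ : Fin d => (0:ℂ)) from by
      funext i
      by_cases hi : lam i = 0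
      · simp [hgdef, hi]
      · simp [hinddef, hi], hDg0]
    exact Matrix.zero_mul _
  · rw [hBB, hone, hDgH _ (fun i => by rw [star_sub, star_one, hstar_ind]), hDgmul]
    refine congrArg Dg (funext fun i => ?_)
    by_cases hi : lam i = 0 <;> simp [hinddef, hi]

end Fact

/-- a quantum channel `𝒞 : L(ℂ^n) → L(ℂ^m)` factors through a
`d`-dimensional quantum memory assisted by classical information — i.e. there
are completely positive maps `ℰ i : L(ℂ^n) → L(ℂ^d)` summing to a trace
preserving map, and channels `𝒟 i : L(ℂ^d) → L(ℂ^m)`, with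
`𝒞 = ∑ i, 𝒟 i ∘ ℰ i` — iff its Choi operator decomposes as
`C = ∑ j, |K j⟩⟩⟨⟨K j|` with `rank (K j) ≤ d` for all `j`. -/
theorem stmt9 (n m d : ℕ)
    (𝒞 : Matrix (Fin n) (Fin n) ℂ →ₗ[ℂ] Matrix (Fin m) (Fin m) ℂ)
    (h𝒞 : IsCPTPMap 𝒞) :
    (∃ (s : ℕ)
       (E : Fin s → (Matrix (Fin n) (Fin n) ℂ →ₗ[ℂ] Matrix (Fin d) (Fin d) ℂ))
       (D : Fin s → (Matrix (Fin d) (Fin d) ℂ →ₗ[ℂ] Matrix (Fin m) (Fin m) ℂ)),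
       (∀ i, IsCPMap (E i)) ∧
       (∀ M : Matrix (Fin n) (Fin n) ℂ, (∑ i, E i M).trace = M.trace) ∧
       (∀ i, IsCPTPMap (D i)) ∧
       (∀ M : Matrix (Fin n) (Fin n) ℂ, 𝒞 M = ∑ i, D i (E i M))) ↔
    (∃ (t : ℕ) (K : Fin t → Matrix (Fin m) (Fin n) ℂ),
       choiFun ⇑𝒞 = ∑ j, dyadM (K j) ∧ ∀ j, (K j).rank ≤ d) := by
  constructor
  · rintro ⟨s, E, D, hE, _hTP, hD, hsum⟩
    choose KE hKE using fun i => kraus_of_choi_psd (E i) (choi_posSemidef (E i) (hE i))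
    choose KD hKD using fun i => kraus_of_choi_psd (D i) (choi_posSemidef (D i) (hD i).1)
    have hC : ∀ M, 𝒞 M = ∑ x : Fin s × (Fin m × Fin d) × (Fin d × Fin n),
        (KD x.1 x.2.1 * KE x.1 x.2.2) * M * (KD x.1 x.2.1 * KE x.1 x.2.2)ᴴ := by
      intro M
      rw [hsum M, Fintype.sum_prod_type]
      refine Finset.sum_congr rfl fun i _ => ?_
      rw [Fintype.sum_prod_type, hKD i (E i M)]
      refine Finset.sum_congr rfl fun a _ => ?_
      rw [hKE i M, Matrix.mul_sum, Matrix.sum_mul]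
      refine Finset.sum_congr rfl fun b _ => ?_
      rw [Matrix.conjTranspose_mul]
      simp only [Matrix.mul_assoc]
    let e := Fintype.equivFin (Fin s × (Fin m × Fin d) × (Fin d × Fin n))
    refine ⟨_, fun j => KD (e.symm j).1 (e.symm j).2.1 * KE (e.symm j).1 (e.symm j).2.2,
      ?_, ?_⟩
    · refine choiFun_kraus (⇑𝒞) _ (fun M => ?_)
      rw [hC M]
      exact (Equiv.sum_comp e.symm fun x => (KD x.1 x.2.1 * KE x.1 x.2.2) * M *
        (KD x.1 x.2.1 * KE x.1 x.2.2)ᴴ).symm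
    · intro j
      refine le_trans (Matrix.rank_mul_le_left _ _) ?_
      simpa using Matrix.rank_le_card_width (KD (e.symm j).1 (e.symm j).2.1)
  · rintro ⟨t, K, hChoi, hrank⟩
    by_cases hm : m = 0
    · subst hm
      refine ⟨0, fun i => i.elim0, fun i => i.elim0, fun i => i.elim0, fun M => ?_,
        fun i => i.elim0, fun M => ?_⟩
      · have h0 : (𝒞 M).trace = M.trace := h𝒞.2 M
        have : (𝒞 M).trace = 0 := by simp [Matrix.trace]
        rw [← h0, this]
        simp
      · ext p q
        exact p.elim0
    · have hC : ∀ M, 𝒞 M = ∑ j, K j * M * (K j)ᴴ := map_eq_kraus_of_choi 𝒞 K hChoi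
      choose Bf Af hBA hPA hQ using fun j => exists_nice_factor (K j) (hrank j)
      set p₀ : Fin m := ⟨0, Nat.pos_of_ne_zero hm⟩ with hp₀
      set u : Fin m → ℂ := Pi.single p₀ 1 with hu
      set Q : Fin t → Matrix (Fin d) (Fin d) ℂ := fun j => 1 - (Bf j)ᴴ * Bf j with hQdef
      set L : Fin t → (Unit ⊕ Fin d) → Matrix (Fin m) (Fin d) ℂ := fun j x =>
        Sum.elim (fun _ : Unit => Bf j) (fun b => Matrix.of fun p i => u p * (Q j) b i) x with hL
      have hLsum : ∀ j, ∑ x : Unit ⊕ Fin d, (L j x)ᴴ * (L j x) = 1 := by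
        intro j
        rw [Fintype.sum_sum_type]
        have h1 : ∑ x : Unit, (L j (Sum.inl x))ᴴ * (L j (Sum.inl x)) = (Bf j)ᴴ * Bf j := by
          simp [hL]
        have hb : ∀ b, (L j (Sum.inr b))ᴴ * (L j (Sum.inr b))
            = fun i i' => star ((Q j) b i) * ((Q j) b i') := by
          intro b
          ext i i'
          rw [Matrix.mul_apply]
          rw [Finset.sum_eq_single p₀]
          · simp [hL, hu]
          · intro p _ hp
            simp [hL, hu, Pi.single_apply, hp]
          · simp
        have h2 : ∑ b : Fin d, (L j (Sum.inr b))ᴴ * (L j (Sum.inr b)) = (Q j)ᴴ * Q j := by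
          simp only [hb]
          ext i i'
          simp [Matrix.sum_apply, Matrix.mul_apply, Matrix.conjTranspose_apply]
          exact Matrix.sum_apply _ _ _ _
        rw [h1, h2, hQdef]
        rw [hQ j]
        abel
      have hEapp : ∀ j M, krausLM (fun _ : Unit => Af j) M = Af j * M * (Af j)ᴴ := by
        intro j M
        rw [krausLM_apply]
        simp
      have hDtp : ∀ j N, (krausLM (L j) N).trace = N.trace := by
        intro j N
        rw [krausLM_apply]
        exact trace_kraus (L j) (hLsum j) N
      have hDE : ∀ j M, krausLM (L j) (krausLM (fun _ : Unit => Af j) M)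
          = K j * M * (K j)ᴴ := by
        intro j M
        rw [hEapp, krausLM_apply, Fintype.sum_sum_type]
        have hinr : ∀ b, L j (Sum.inr b) * (Af j * M * (Af j)ᴴ) * (L j (Sum.inr b))ᴴ = 0 := by
          intro b
          have hz : L j (Sum.inr b) * Af j = 0 := by
            ext p q
            rw [Matrix.mul_apply]
            have : ∀ i, L j (Sum.inr b) p i * Af j i q = u p * ((Q j) b i * Af j i q) := by
              intro i
              simp only [hL, Sum.elim_inr, Matrix.of_apply]
              ring
            simp only [this, ← Finset.mul_sum]
            rw [← Matrix.mul_apply, hPA j]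
            simp
          simp only [← Matrix.mul_assoc]
          rw [hz]
          simp
        rw [Finset.sum_eq_zero (fun b _ => hinr b), add_zero]
        have : ∀ x : Unit, L j (Sum.inl x) * (Af j * M * (Af j)ᴴ) * (L j (Sum.inl x))ᴴ
            = K j * M * (K j)ᴴ := by
          intro x
          simp only [hL, Sum.elim_inl]
          rw [hBA j]
          simp only [Matrix.conjTranspose_mul, Matrix.mul_assoc]
        simp [this]
      have hfinal : ∀ M, 𝒞 M = ∑ j, krausLM (L j) (krausLM (fun _ : Unit => Af j) M) := by
        intro M
        rw [hC M]
        exact (Finset.sum_congr rfl fun j _ => (hDE j M)).symm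
      refine ⟨t, fun j => krausLM (fun _ : Unit => Af j), fun j => krausLM (L j),
        fun j => isCPMap_of_kraus _ _ (fun M => krausLM_apply _ M), fun M => ?_,
        fun j => ⟨isCPMap_of_kraus _ _ (fun M => krausLM_apply _ M), hDtp j⟩, fun M => hfinal M⟩
      calc (∑ j, krausLM (fun _ : Unit => Af j) M).trace
          = ∑ j, (krausLM (fun _ : Unit => Af j) M).trace := Matrix.trace_sum _ _
        _ = ∑ j, (krausLM (L j) (krausLM (fun _ : Unit => Af j) M)).trace :=
            Finset.sum_congr rfl fun j _ => (hDtp j _).symm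
        _ = (∑ j, krausLM (L j) (krausLM (fun _ : Unit => Af j) M)).trace :=
            (Matrix.trace_sum _ _).symm
        _ = (𝒞 M).trace := by rw [← hfinal M]
        _ = M.trace := h𝒞.2 M
end
end

section
/- Let d ≥ 2 and let 𝒞 : Matrix d d ℂ → Matrix d d ℂ be a linear map satisfying 𝒞(U* ρ Uᵀ) = U 𝒞(ρ) U† for every unitary U ∈ Matrix d d ℂ and every ρ ∈ Matrix d d ℂ (where U* is the entrywise complex conjugate and Uᵀ the transpose). Then there exist scalars γ, δ ∈ ℂ such that the Choi operator of 𝒞 equals C = γ P₊ + δ P₋, where P_± = (I ± E)/2 are the projectors onto the symmetric and antisymmetric subspaces of ℂ^d ⊗ ℂ^d; moreover, if 𝒞 is trace preserving then (d+1)γ + (d−1)δ = 2, and if 𝒞 is completely positive then γ, δ ≥ 0. -/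
open ComplexOrder

noncomputable section

/-- The swap (flip) operator `E` on `ℂ^d ⊗ ℂ^d`. -/
def swapOp (d : ℕ) : Matrix (Fin d × Fin d) (Fin d × Fin d) ℂ :=
  fun p q => if p.1 = q.2 ∧ p.2 = q.1 then 1 else 0

/-- The projector `P₊ = (I + E)/2` onto the symmetric subspace of `ℂ^d ⊗ ℂ^d`. -/
def Pplus (d : ℕ) : Matrix (Fin d × Fin d) (Fin d × Fin d) ℂ :=
  ((1 : ℂ) / 2) • ((1 : Matrix (Fin d × Fin d) (Fin d × Fin d) ℂ) + swapOp d)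

/-- The projector `P₋ = (I - E)/2` onto the antisymmetric subspace of `ℂ^d ⊗ ℂ^d`. -/
def Pminus (d : ℕ) : Matrix (Fin d × Fin d) (Fin d × Fin d) ℂ :=
  ((1 : ℂ) / 2) • ((1 : Matrix (Fin d × Fin d) (Fin d × Fin d) ℂ) - swapOp d)

section helpers
open Matrix
variable {d : ℕ}

lemma choi_apply (F : Matrix (Fin d) (Fin d) ℂ →ₗ[ℂ] Matrix (Fin d) (Fin d) ℂ)
    (p k q l : Fin d) :
    choiFun ⇑F (p,k) (q,l) = F (Matrix.single k l 1) p q := by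
  simp [choiFun, Matrix.single, Matrix.sum_apply, Finset.sum_ite_eq, ite_and]

lemma key_counts (k l p q a : Fin d)
    (h : star (if k = a then Complex.I else 1) * (if l = a then Complex.I else 1)
       = (if p = a then Complex.I else 1) * star (if q = a then Complex.I else 1)) :
    ((if l = a then 1 else 0) + (if q = a then 1 else 0) : ℕ)
      = (if p = a then 1 else 0) + (if k = a then 1 else 0) := by
  by_cases h1 : k = a <;> by_cases h2 : l = a <;> by_cases h3 : p = a <;> by_cases h4 : q = a <;>
    simp_all [Complex.ext_iff] <;> norm_num at h

lemma pair_of_counts (k l p q : Fin d)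
    (h : ∀ a : Fin d, ((if l = a then 1 else 0) + (if q = a then 1 else 0) : ℕ)
      = (if p = a then 1 else 0) + (if k = a then 1 else 0)) :
    (l = p ∧ q = k) ∨ (l = k ∧ q = p) := by
  by_cases hlp : l = p
  · subst hlp
    have H := h q
    by_cases c1 : l = q <;> by_cases c3 : k = q <;> simp_all
  · have H1 := h l
    have hpl : ¬ p = l := fun h' => hlp h'.symm
    have hkl : k = l ∧ ¬ q = l := by
      by_cases c1 : k = l <;> by_cases c2 : q = l <;> simp_all
    have H2 := h q
    have hkq : ¬ k = q := fun h' => hkl.2 (h' ▸ hkl.1 : (q:Fin d) = l)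
    have hlq : ¬ l = q := fun h' => hkl.2 h'.symm
    have hpq : p = q := by by_cases c : p = q <;> simp_all
    exact Or.inr ⟨hkl.1.symm, hpq.symm⟩

lemma diag_mul_std_mul_diag (a b : Fin d → ℂ) (k l : Fin d) :
    diagonal a * single k l 1 * diagonal b = (a k * b l) • single k l 1 := by
  ext i j
  rw [Matrix.mul_diagonal, Matrix.diagonal_mul, Matrix.smul_apply]
  by_cases h1 : k = i <;> by_cases h2 : l = j <;>
    simp [Matrix.single, h1, h2]

lemma std_conjTranspose (a b : Fin d) :
    (single a b (1:ℂ))ᴴ = single b a 1 := by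
  ext i j
  simp only [Matrix.conjTranspose_apply, Matrix.single, Matrix.of_apply]
  by_cases h1 : a = j <;> by_cases h2 : b = i <;> simp [h1, h2]

lemma std_transpose (a b : Fin d) :
    (single a b (1:ℂ))ᵀ = single b a 1 := by
  ext i j
  simp only [Matrix.transpose_apply, Matrix.single, Matrix.of_apply]
  by_cases h1 : a = j <;> by_cases h2 : b = i <;> simp [h1, h2]

lemma std_mul_mul_std (M : Matrix (Fin d) (Fin d) ℂ) (a b c e : Fin d) :
    single a b (1:ℂ) * M * single c e 1 = M b c • single a e 1 := by
  ext i j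
  rw [Matrix.mul_apply, Matrix.smul_apply]
  rw [Finset.sum_eq_single c]
  · rw [Matrix.mul_apply, Finset.sum_eq_single b]
    · by_cases h1 : a = i <;> by_cases h2 : e = j <;>
        simp [Matrix.single, h1, h2] <;> ring
    · intro m _ hm
      simp [Matrix.single, Ne.symm hm]
    · simp
  · intro m _ hm
    simp [Matrix.single, Ne.symm hm]
  · simp

lemma zero_entry (𝒞 : Matrix (Fin d) (Fin d) ℂ →ₗ[ℂ] Matrix (Fin d) (Fin d) ℂ)
    (hcov : ∀ U ∈ Matrix.unitaryGroup (Fin d) ℂ,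
      ∀ ρ : Matrix (Fin d) (Fin d) ℂ,
        𝒞 ((star U).transpose * ρ * U.transpose) = U * 𝒞 ρ * star U)
    (p k q l : Fin d) (hne : ¬((l = p ∧ q = k) ∨ (l = k ∧ q = p))) :
    choiFun ⇑𝒞 (p,k) (q,l) = 0 := by
  rw [choi_apply]
  by_contra hx
  apply hne
  apply pair_of_counts
  intro a
  apply key_counts k l p q a
  set t : Fin d → ℂ := fun m => if m = a then Complex.I else 1 with ht
  have hU : diagonal t ∈ Matrix.unitaryGroup (Fin d) ℂ := by
    rw [Matrix.mem_unitaryGroup_iff, Matrix.star_eq_conjTranspose,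
      Matrix.diagonal_conjTranspose, diagonal_mul_diagonal]
    ext i j
    by_cases hij : i = j <;>
      by_cases hia : i = a <;>
        simp_all [Matrix.diagonal_apply, Matrix.one_apply, Complex.mul_conj, t]
  have H := hcov (diagonal t) hU (single k l 1)
  rw [Matrix.star_eq_conjTranspose, Matrix.diagonal_conjTranspose, Matrix.diagonal_transpose,
    Matrix.diagonal_transpose, diag_mul_std_mul_diag, _root_.map_smul] at H
  have He := congrFun (congrFun (congrArg (fun M => (M : Matrix _ _ ℂ)) H) p) q
  simp only [Matrix.smul_apply, smul_eq_mul] at He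
  rw [Matrix.mul_diagonal, Matrix.diagonal_mul] at He
  have He' : (star t k * t l) * 𝒞 (single k l 1) p q
      = (t p * star t q) * 𝒞 (single k l 1) p q := by
    rw [He]; ring
  have := mul_right_cancel₀ hx He'
  simpa [ht, Pi.star_apply] using this

lemma perm_entry (𝒞 : Matrix (Fin d) (Fin d) ℂ →ₗ[ℂ] Matrix (Fin d) (Fin d) ℂ)
    (hcov : ∀ U ∈ Matrix.unitaryGroup (Fin d) ℂ,
      ∀ ρ : Matrix (Fin d) (Fin d) ℂ,
        𝒞 ((star U).transpose * ρ * U.transpose) = U * 𝒞 ρ * star U)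
    (σ : Equiv.Perm (Fin d)) (p k q l : Fin d) :
    choiFun ⇑𝒞 (σ p, σ k) (σ q, σ l) = choiFun ⇑𝒞 (p, k) (q, l) := by
  classical
  set P : Matrix (Fin d) (Fin d) ℂ := σ.toPEquiv.toMatrix with hP
  have hstar : star P = Pᵀ := by
    ext i j
    simp only [Matrix.star_apply, Matrix.transpose_apply, hP, PEquiv.toMatrix_apply]
    split <;> simp
  have hPT : Pᵀ = (σ.symm).toPEquiv.toMatrix := by
    rw [hP, ← PEquiv.toMatrix_symm, Equiv.toPEquiv_symm]
  have hconj : ∀ M : Matrix (Fin d) (Fin d) ℂ, P * M * Pᵀ = M.submatrix σ σ := by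
    intro M
    rw [hPT, PEquiv.mul_toMatrix_toPEquiv, hP, PEquiv.toMatrix_toPEquiv_mul]
    ext i j
    simp
  have hunit : P ∈ Matrix.unitaryGroup (Fin d) ℂ := by
    have h1 := hconj 1
    rw [Matrix.mul_one, Matrix.submatrix_one_equiv] at h1
    rw [Matrix.mem_unitaryGroup_iff, hstar]
    exact h1
  have H := hcov P hunit (single (σ k) (σ l) 1)
  rw [hstar, Matrix.transpose_transpose] at H
  have hin : P * single (σ k) (σ l) 1 * Pᵀ = single k l (1:ℂ) := by
    rw [hconj]
    ext i j
    by_cases h1 : i = k <;> by_cases h2 : j = l <;>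
      simp [Matrix.single, h1, h2, Matrix.submatrix_apply]
  rw [hin, hconj] at H
  have He := congrFun (congrFun (congrArg (fun M => (M : Matrix _ _ ℂ)) H) p) q
  simp only [Matrix.submatrix_apply] at He
  rw [choi_apply, choi_apply]
  exact He.symm

end helpers

section rot
open Matrix
variable {d : ℕ}

lemma rot_entry (𝒞 : Matrix (Fin d) (Fin d) ℂ →ₗ[ℂ] Matrix (Fin d) (Fin d) ℂ)
    (hcov : ∀ U ∈ Matrix.unitaryGroup (Fin d) ℂ,
      ∀ ρ : Matrix (Fin d) (Fin d) ℂ,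
        𝒞 ((star U).transpose * ρ * U.transpose) = U * 𝒞 ρ * star U)
    (i0 i1 : Fin d) (h01 : i0 ≠ i1) :
    choiFun ⇑𝒞 (i0,i0) (i0,i0)
      = choiFun ⇑𝒞 (i1,i0) (i1,i0) + choiFun ⇑𝒞 (i0,i1) (i1,i0) := by
  classical
  have h10 : i1 ≠ i0 := h01.symm
  set E : Fin d → Fin d → Matrix (Fin d) (Fin d) ℂ := fun a b => single a b 1 with hE
  set v : Fin d → ℂ := fun m => if m = i0 ∨ m = i1 then 0 else 1 with hv
  set A : Matrix (Fin d) (Fin d) ℂ := diagonal v with hA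
  set c : ℂ := ((Real.sqrt 2 : ℝ) : ℂ)⁻¹ with hc
  set B : Matrix (Fin d) (Fin d) ℂ := E i0 i0 + E i0 i1 - E i1 i0 + E i1 i1 with hB
  set B' : Matrix (Fin d) (Fin d) ℂ := E i0 i0 + E i1 i0 - E i0 i1 + E i1 i1 with hB'
  set U : Matrix (Fin d) (Fin d) ℂ := A + c • B with hU
  have hv0 : v i0 = 0 := by simp [hv]
  have hv1 : v i1 = 0 := by simp [hv]
  have hc2 : c * c = 1/2 := by
    rw [hc, ← mul_inv]
    norm_cast
    rw [Real.mul_self_sqrt (by norm_num : (0:ℝ) ≤ 2)]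
    norm_num
  have hcc : c * c ≠ 0 := by rw [hc2]; norm_num
  have hcstar : star c = c := by
    rw [hc]
    simp [Complex.star_def, map_inv₀, Complex.conj_ofReal]
  have hAE : ∀ a b : Fin d, a = i0 ∨ a = i1 → A * E a b = 0 := by
    intro a b ha
    ext i j
    rw [hA, Matrix.diagonal_mul]
    by_cases hai : a = i
    · subst hai
      rcases ha with rfl | rfl <;> simp [hv0, hv1]
    · simp [hE, Matrix.single, hai]
  have hEA : ∀ a b : Fin d, b = i0 ∨ b = i1 → E a b * A = 0 := by
    intro a b hb
    ext i j
    rw [hA, Matrix.mul_diagonal]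
    by_cases hbj : b = j
    · subst hbj
      rcases hb with rfl | rfl <;> simp [hv0, hv1]
    · simp [hE, Matrix.single, hbj]
  have hAA : A * A = A := by
    ext i j
    rw [hA, Matrix.diagonal_mul_diagonal]
    by_cases hij : i = j
    · subst hij
      rw [Matrix.diagonal_apply_eq, Matrix.diagonal_apply_eq]
      by_cases hm : i = i0 ∨ i = i1 <;> simp [hv, hm]
    · rw [Matrix.diagonal_apply_ne _ hij, Matrix.diagonal_apply_ne _ hij]
  have hAH : star A = A := by
    ext i j
    rw [hA, Matrix.star_eq_conjTranspose, Matrix.diagonal_conjTranspose]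
    by_cases hij : i = j
    · subst hij
      rw [Matrix.diagonal_apply_eq, Matrix.diagonal_apply_eq]
      by_cases hm : i = i0 ∨ i = i1 <;> simp [hv, hm]
    · rw [Matrix.diagonal_apply_ne _ hij, Matrix.diagonal_apply_ne _ hij]
  have hAT : Aᵀ = A := Matrix.diagonal_transpose v
  have hBstar : star B = B' := by
    rw [hB, hB', Matrix.star_eq_conjTranspose]
    simp only [Matrix.conjTranspose_add, Matrix.conjTranspose_sub, hE, std_conjTranspose]
  have hBT : Bᵀ = B' := by
    rw [hB, hB']
    simp only [Matrix.transpose_add, Matrix.transpose_sub, hE, std_transpose]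
  have hB'T : B'ᵀ = B := by
    rw [hB, hB']
    simp only [Matrix.transpose_add, Matrix.transpose_sub, hE, std_transpose]
  have hstarU : star U = A + c • B' := by
    rw [hU, star_add, star_smul, hAH, hBstar, hcstar]
  have hUT : Uᵀ = A + c • B' := by
    rw [hU, Matrix.transpose_add, Matrix.transpose_smul, hAT, hBT]
  have hUstarT : (star U)ᵀ = U := by
    rw [hstarU, Matrix.transpose_add, Matrix.transpose_smul, hAT, hB'T, hU]
  have hBB' : B * B' = (2:ℂ) • (E i0 i0 + E i1 i1) := by
    rw [hB, hB']
    simp only [add_mul, sub_mul, mul_add, mul_sub, hE, Matrix.single_mul_single_same,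
      Matrix.single_mul_single_of_ne, h01, h10, ne_eq, not_false_iff, mul_one]
    module
  have hAB' : A * B' = 0 := by
    rw [hB']
    simp only [mul_add, mul_sub, hAE _ _ (Or.inl rfl), hAE _ _ (Or.inr rfl)]
    simp
  have hBA : B * A = 0 := by
    rw [hB]
    simp only [add_mul, sub_mul, hEA _ _ (Or.inl rfl), hEA _ _ (Or.inr rfl)]
    simp
  have hUU : U * star U = 1 := by
    rw [hstarU, hU]
    have expand : (A + c • B) * (A + c • B')
        = A * A + c • (A * B') + c • (B * A) + (c * c) • (B * B') := by
      simp only [add_mul, mul_add, smul_mul_assoc, mul_smul_comm, smul_smul, smul_add]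
      abel
    have hsc : (c * c) • ((2:ℂ) • (E i0 i0 + E i1 i1)) = E i0 i0 + E i1 i1 := by
      rw [smul_smul, hc2]
      norm_num
    rw [expand, hAA, hAB', hBA, hBB']
    simp only [smul_zero, add_zero]
    rw [hsc]
    ext i j
    by_cases hij : i = j
    · subst hij
      by_cases h0 : i = i0
      · subst h0
        simp [hA, Matrix.diagonal_apply, hv0, hE, Matrix.single, Matrix.one_apply, h10]
      · by_cases h1 : i = i1
        · subst h1
          simp [hA, Matrix.diagonal_apply, hv1, hE, Matrix.single, Matrix.one_apply, h01]
        · have h0' : ¬ i0 = i := fun h => h0 h.symm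
          have h1' : ¬ i1 = i := fun h => h1 h.symm
          simp [hA, Matrix.diagonal_apply, hv, h0, h1, hE, Matrix.single,
            Matrix.one_apply, h0', h1']
    · have : ¬ (i0 = i ∧ i0 = j) := fun ⟨a, b⟩ => hij (a ▸ b)
      have h2 : ¬ (i1 = i ∧ i1 = j) := fun ⟨a, b⟩ => hij (a ▸ b)
      simp [hA, Matrix.diagonal_apply, hij, hE, Matrix.single, Matrix.one_apply, this, h2]
  have hUmem : U ∈ Matrix.unitaryGroup (Fin d) ℂ := Matrix.mem_unitaryGroup_iff.mpr hUU
  have H := hcov U hUmem (E i0 i0)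
  rw [hUstarT, hUT] at H
  have hBE : B * E i0 i0 = E i0 i0 - E i1 i0 := by
    rw [hB]
    simp only [add_mul, sub_mul, hE, Matrix.single_mul_single_same,
      Matrix.single_mul_single_of_ne, h01, h10, ne_eq, not_false_iff, mul_one]
    abel
  have hUE : U * E i0 i0 = c • (E i0 i0 - E i1 i0) := by
    rw [hU, add_mul, smul_mul_assoc, hAE _ _ (Or.inl rfl), hBE, zero_add]
  have hEB' : (E i0 i0 - E i1 i0) * B' = E i0 i0 - E i0 i1 - E i1 i0 + E i1 i1 := by
    rw [hB']
    simp only [sub_mul, mul_add, mul_sub, hE, Matrix.single_mul_single_same,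
      Matrix.single_mul_single_of_ne, h01, h10, ne_eq, not_false_iff, mul_one]
    abel
  have hin : U * E i0 i0 * (A + c • B')
      = (c * c) • (E i0 i0 - E i0 i1 - E i1 i0 + E i1 i1) := by
    rw [hUE, smul_mul_assoc, mul_add]
    rw [sub_mul, hEA _ _ (Or.inl rfl), hEA _ _ (Or.inl rfl), sub_zero]
    rw [mul_smul_comm, hEB', zero_add, smul_smul]
  rw [hin] at H
  set M : Matrix (Fin d) (Fin d) ℂ := 𝒞 (E i0 i0) with hM
  have hexp : (A + c • B) * M * (A + c • B')
      = A * M * A + c • (A * M * B') + c • (B * M * A) + (c * c) • (B * M * B') := by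
    simp only [add_mul, mul_add, smul_mul_assoc, mul_smul_comm, smul_smul, smul_add]
    abel
  rw [hstarU, hU, hexp] at H
  have He := congrFun (congrFun (congrArg (fun X => (X : Matrix (Fin d) (Fin d) ℂ)) H) i0) i1
  simp only [LinearMap.map_smul, map_sub, map_add, Matrix.smul_apply, Matrix.sub_apply,
    Matrix.add_apply, smul_eq_mul] at He
  -- evaluate entries on the RHS
  have e1 : (A * M * A) i0 i1 = 0 := by
    rw [hA, Matrix.mul_diagonal]
    simp [hv1]
  have e2 : (A * M * B') i0 i1 = 0 := by
    rw [mul_assoc, hA, Matrix.diagonal_mul]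
    simp [hv0]
  have e3 : (B * M * A) i0 i1 = 0 := by
    rw [hA, Matrix.mul_diagonal]
    simp [hv1]
  have e4 : (B * M * B') i0 i1 = -(M i0 i0) + M i0 i1 - M i1 i0 + M i1 i1 := by
    rw [hB, hB']
    simp only [add_mul, sub_mul, mul_add, mul_sub, hE, std_mul_mul_std]
    simp only [Matrix.add_apply, Matrix.sub_apply, Matrix.smul_apply, smul_eq_mul,
      Matrix.single, Matrix.of_apply, h01, h10, and_true, and_false, if_true, if_false,
      if_neg h01, if_neg h10]
    ring
  rw [e1, e2, e3, e4] at He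
  -- rewrite the Choi entries
  have g1 : 𝒞 (E i0 i0) i0 i1 = 0 := by
    have := zero_entry 𝒞 hcov i0 i0 i1 i0 (by tauto)
    rwa [choi_apply] at this
  have g2 : 𝒞 (E i0 i1) i0 i1 = 0 := by
    have := zero_entry 𝒞 hcov i0 i0 i1 i1 (by tauto)
    rwa [choi_apply] at this
  have g4 : 𝒞 (E i1 i1) i0 i1 = 0 := by
    have := zero_entry 𝒞 hcov i0 i1 i1 i1 (by tauto)
    rwa [choi_apply] at this
  have m2 : M i0 i1 = 0 := by rw [hM]; exact g1
  have m3 : M i1 i0 = 0 := by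
    rw [hM]
    have := zero_entry 𝒞 hcov i1 i0 i0 i0 (by tauto)
    rwa [choi_apply] at this
  rw [hM] at He
  rw [g1, g2, g4] at He
  rw [show (𝒞 (E i0 i0) : Matrix (Fin d) (Fin d) ℂ) i0 i0
      = choiFun ⇑𝒞 (i0,i0) (i0,i0) from (choi_apply 𝒞 i0 i0 i0 i0).symm] at He
  rw [show (𝒞 (E i0 i0) : Matrix (Fin d) (Fin d) ℂ) i1 i0 = (0:ℂ) from m3,
    show (𝒞 (E i0 i0) : Matrix (Fin d) (Fin d) ℂ) i1 i1
      = choiFun ⇑𝒞 (i1,i0) (i1,i0) from (choi_apply 𝒞 i1 i0 i1 i0).symm,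
    show (𝒞 (E i1 i0) : Matrix (Fin d) (Fin d) ℂ) i0 i1
      = choiFun ⇑𝒞 (i0,i1) (i1,i0) from (choi_apply 𝒞 i0 i1 i1 i0).symm] at He
  have h' : (c*c) * (choiFun ⇑𝒞 (i0,i0) (i0,i0))
      = (c*c) * (choiFun ⇑𝒞 (i1,i0) (i1,i0) + choiFun ⇑𝒞 (i0,i1) (i1,i0)) := by
    linear_combination He
  exact mul_left_cancel₀ hcc h'
end rot

section main
open Matrix
variable {d : ℕ}

lemma exists_perm_two (i0 i1 a b : Fin d) (h01 : i0 ≠ i1) (hab : a ≠ b) :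
    ∃ σ : Equiv.Perm (Fin d), σ i0 = a ∧ σ i1 = b := by
  classical
  set τ := Equiv.swap i0 a with hτ
  set k : Fin d := τ b with hk
  have hk0 : k ≠ i0 := by
    rw [hk, hτ]
    intro h
    rw [Equiv.swap_apply_eq_iff, Equiv.swap_apply_left] at h
    exact hab h.symm
  refine ⟨(Equiv.swap i1 k).trans τ, ?_, ?_⟩
  · rw [Equiv.trans_apply, Equiv.swap_apply_of_ne_of_ne h01 (Ne.symm hk0), hτ,
      Equiv.swap_apply_left]
  · rw [Equiv.trans_apply, Equiv.swap_apply_left, hk, hτ, Equiv.swap_apply_self]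

lemma dyad_psd {m n : Type} [Fintype m] [Fintype n] (K : Matrix m n ℂ) :
    (dyadM K).PosSemidef := by
  rw [Matrix.posSemidef_iff_dotProduct_mulVec]
  constructor
  · ext p q
    simp only [Matrix.conjTranspose_apply, dyadM, star_mul', star_star]
    ring
  · intro x
    have hw : star x ⬝ᵥ (dyadM K).mulVec x
        = star (∑ q, star (K q.1 q.2) * x q) * (∑ q, star (K q.1 q.2) * x q) := by
      simp only [dotProduct, Matrix.mulVec, dyadM, star_sum, star_mul', star_star,
        Finset.mul_sum, Finset.sum_mul]
      rw [Finset.sum_comm]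
      apply Finset.sum_congr rfl
      intro p _
      apply Finset.sum_congr rfl
      intro q _
      simp only [Pi.star_apply]
      ring
    rw [hw]
    exact star_mul_self_nonneg _

lemma tensorId_dyad_one (𝒞 : Matrix (Fin d) (Fin d) ℂ →ₗ[ℂ] Matrix (Fin d) (Fin d) ℂ) :
    tensorId ⇑𝒞 (dyadM (1 : Matrix (Fin d) (Fin d) ℂ)) = choiFun ⇑𝒞 := by
  apply Matrix.ext
  rintro ⟨p, k⟩ ⟨q, l⟩
  rw [choi_apply]
  show 𝒞 (fun i j => dyadM (1 : Matrix (Fin d) (Fin d) ℂ) (i, k) (j, l)) p q = _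
  have harg : (fun i j => dyadM (1 : Matrix (Fin d) (Fin d) ℂ) (i, k) (j, l))
      = Matrix.single k l (1:ℂ) := by
    funext i j
    simp only [dyadM, Matrix.one_apply, Matrix.single, Matrix.of_apply]
    by_cases h1 : i = k <;> by_cases h2 : j = l
    · subst h1; subst h2; simp
    · have h2' : ¬ l = j := fun h => h2 h.symm
      subst h1; simp [h2, h2']
    · have h1' : ¬ k = i := fun h => h1 h.symm
      subst h2; simp [h1, h1']
    · have h1' : ¬ k = i := fun h => h1 h.symm
      simp [h1, h1']
  rw [harg]

end main

section thmsec
open Matrix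
/-- a linear map on `L(ℂ^d)` satisfying
`𝒞(U* ρ Uᵀ) = U 𝒞(ρ) U†` for all unitaries `U` has Choi operator of the form
`γ P₊ + δ P₋`; moreover `(d+1)γ + (d-1)δ = 2` if `𝒞` is trace preserving, and
`γ, δ ≥ 0` if `𝒞` is completely positive. -/
theorem stmt12 (d : ℕ) (hd : 2 ≤ d)
    (𝒞 : Matrix (Fin d) (Fin d) ℂ →ₗ[ℂ] Matrix (Fin d) (Fin d) ℂ)
    (hcov : ∀ U ∈ Matrix.unitaryGroup (Fin d) ℂ,
      ∀ ρ : Matrix (Fin d) (Fin d) ℂ,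
        𝒞 ((star U).transpose * ρ * U.transpose) = U * 𝒞 ρ * star U) :
    ∃ γ δ : ℂ,
      choiFun ⇑𝒞 = γ • Pplus d + δ • Pminus d ∧
      ((∀ A : Matrix (Fin d) (Fin d) ℂ, (𝒞 A).trace = A.trace) →
        ((d : ℂ) + 1) * γ + ((d : ℂ) - 1) * δ = 2) ∧
      (IsCPMap 𝒞 → 0 ≤ γ ∧ 0 ≤ δ) := by
  classical
  set i0 : Fin d := ⟨0, by omega⟩ with hi0
  set i1 : Fin d := ⟨1, by omega⟩ with hi1
  have h01 : i0 ≠ i1 := by simp [hi0, hi1, Fin.ext_iff]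
  have h10 : i1 ≠ i0 := h01.symm
  set C : Matrix (Fin d × Fin d) (Fin d × Fin d) ℂ := choiFun ⇑𝒞 with hCdef
  set α : ℂ := C (i0,i1) (i0,i1) with hα
  set β : ℂ := C (i0,i1) (i1,i0) with hβ
  have hαg : ∀ a b : Fin d, a ≠ b → C (a,b) (a,b) = α := by
    intro a b hab
    obtain ⟨σ, h1, h2⟩ := exists_perm_two i0 i1 a b h01 hab
    have := perm_entry 𝒞 hcov σ i0 i1 i0 i1
    rw [h1, h2] at this
    rw [hCdef, this, hα]
  have hβg : ∀ a b : Fin d, a ≠ b → C (a,b) (b,a) = β := by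
    intro a b hab
    obtain ⟨σ, h1, h2⟩ := exists_perm_two i0 i1 a b h01 hab
    have := perm_entry 𝒞 hcov σ i0 i1 i1 i0
    rw [h1, h2] at this
    rw [hCdef, this, hβ]
  have hxg : ∀ a : Fin d, C (a,a) (a,a) = α + β := by
    intro a
    have hswap := perm_entry 𝒞 hcov (Equiv.swap i0 a) i0 i0 i0 i0
    rw [Equiv.swap_apply_left] at hswap
    have hrot := rot_entry 𝒞 hcov i0 i1 h01
    rw [hCdef, hswap, hrot, ← hCdef, hαg i1 i0 h10, ← hβ]
  have hmain : choiFun ⇑𝒞 = (α + β) • Pplus d + (α - β) • Pminus d := by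
    rw [← hCdef]
    ext ⟨p, k⟩ ⟨q, l⟩
    have hRHS : ((α + β) • Pplus d + (α - β) • Pminus d) (p,k) (q,l)
        = (α + β) * (1/2) * ((if (p,k) = (q,l) then 1 else 0) + (if p = l ∧ k = q then 1 else 0))
          + (α - β) * (1/2) * ((if (p,k) = (q,l) then 1 else 0) - (if p = l ∧ k = q then 1 else 0)) := by
      simp only [Matrix.add_apply, Matrix.smul_apply, Pplus, Pminus, swapOp, Matrix.sub_apply,
        Matrix.one_apply, smul_eq_mul]
      ring
    rw [hRHS]
    by_cases h1 : p = q
    · subst h1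
      by_cases h2 : k = l
      · subst h2
        by_cases hpk : p = k
        · subst hpk
          rw [hxg p]; simp; ring
        · have hnk : ¬ (p = k ∧ k = p) := fun ⟨u, _⟩ => hpk u
          rw [hαg p k hpk]
          simp [hnk]
          ring
      · have hz : C (p,k) (p,l) = 0 := by
          apply zero_entry 𝒞 hcov
          rintro (⟨rfl, rfl⟩ | ⟨rfl, -⟩) <;> exact h2 rfl
        have hne1 : ¬ ((p,k) = (p,l)) := by simp [Prod.ext_iff, h2]
        have hne2 : ¬ (p = l ∧ k = p) := fun ⟨u, w⟩ => h2 (w.trans u)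
        rw [hz]
        simp [hne1, hne2]
    · by_cases h3 : l = p
      · subst h3
        by_cases h4 : q = k
        · subst h4
          rw [hβg l q (fun h => h1 h)]
          have hne1 : ¬ ((l,q) = (q,l)) := by
            simp only [Prod.mk.injEq, not_and]
            intro u
            exact absurd u h1
          simp [hne1]
          ring
        · have hz : C (l,k) (q,l) = 0 := by
            apply zero_entry 𝒞 hcov
            rintro (⟨-, rfl⟩ | ⟨rfl, rfl⟩)
            · exact h4 rfl
            · exact h1 rfl
          have hne1 : ¬ ((l,k) = (q,l)) := by
            simp only [Prod.mk.injEq, not_and]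
            intro u
            exact absurd u h1
          have hne2 : ¬ (l = l ∧ k = q) := fun ⟨_, w⟩ => h4 w.symm
          have h4' : ¬ k = q := fun h => h4 h.symm
          rw [hz]
          simp [hne1, hne2, h4']
      · have hz : C (p,k) (q,l) = 0 := by
          apply zero_entry 𝒞 hcov
          rintro (⟨rfl, rfl⟩ | ⟨rfl, rfl⟩)
          · exact h3 rfl
          · exact h1 rfl
        have hne1 : ¬ ((p,k) = (q,l)) := by
          simp only [Prod.mk.injEq, not_and]
          intro u
          exact absurd u h1
        have hne2 : ¬ (p = l ∧ k = q) := fun ⟨u, _⟩ => h3 u.symm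
        rw [hz]
        simp [hne1, hne2]
  refine ⟨α + β, α - β, hmain, ?_, ?_⟩
  · -- trace preserving
    intro htr
    have h1 := htr (single i0 i0 1)
    have htrE : (single i0 i0 (1:ℂ)).trace = 1 := by
      simp [Matrix.trace, Matrix.diag, Matrix.single, ite_and, Finset.sum_ite_eq]
    have htrC : (𝒞 (single i0 i0 1)).trace = ∑ p : Fin d, C (p, i0) (p, i0) := by
      rw [Matrix.trace]
      apply Finset.sum_congr rfl
      intro p _
      rw [Matrix.diag, hCdef, choi_apply]
    have hval : ∀ p : Fin d, C (p,i0) (p,i0) = α + (if p = i0 then β else 0) := by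
      intro p
      by_cases hp : p = i0
      · subst hp; rw [hxg i0]; simp
      · rw [hαg p i0 hp]; simp [hp]
    rw [htrC, htrE] at h1
    simp_rw [hval] at h1
    rw [Finset.sum_add_distrib, Finset.sum_const, Finset.card_univ, Fintype.card_fin,
      Finset.sum_ite_eq' Finset.univ i0 (fun _ => β)] at h1
    simp only [Finset.mem_univ, if_true, nsmul_eq_mul] at h1
    linear_combination 2 * h1
  · -- CP
    intro hcp
    have hpsd0 := hcp d (dyadM (1 : Matrix (Fin d) (Fin d) ℂ)) (dyad_psd _)
    rw [tensorId_dyad_one] at hpsd0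
    rw [← hCdef] at hpsd0
    constructor
    · have hq := hpsd0.dotProduct_mulVec_nonneg (fun r => if r = (i0,i0) then 1 else 0)
      have hqv : star (fun r => if r = (i0,i0) then (1:ℂ) else 0) ⬝ᵥ
          (C *ᵥ fun r => if r = (i0,i0) then 1 else 0) = C (i0,i0) (i0,i0) := by
        simp [dotProduct, Matrix.mulVec, apply_ite (star : ℂ → ℂ), mul_ite, ite_mul,
          Finset.sum_ite_eq']
      rw [hqv, hxg i0] at hq
      exact hq
    · have hq := hpsd0.dotProduct_mulVec_nonneg (fun r => (if r = (i0,i1) then 1 else 0) - (if r = (i1,i0) then 1 else 0))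
      have hne : ((i0,i1) : Fin d × Fin d) ≠ (i1,i0) := by simp [Prod.ext_iff, h01]
      have hqv : star (fun r => (if r = (i0,i1) then (1:ℂ) else 0) - (if r = (i1,i0) then 1 else 0)) ⬝ᵥ
          (C *ᵥ fun r => (if r = (i0,i1) then 1 else 0) - (if r = (i1,i0) then 1 else 0))
          = C (i0,i1) (i0,i1) - C (i0,i1) (i1,i0) - C (i1,i0) (i0,i1) + C (i1,i0) (i1,i0) := by
        simp only [dotProduct, Matrix.mulVec, Pi.star_apply, star_sub,
          apply_ite (star : ℂ → ℂ), star_one, star_zero, sub_mul, mul_sub, mul_ite, ite_mul,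
          one_mul, mul_one, zero_mul, mul_zero,
          Finset.sum_sub_distrib, Finset.sum_ite_eq', Finset.mem_univ, if_true]
        ring
      rw [hqv, ← hα, ← hβ, hαg i1 i0 h10, hβg i1 i0 h10] at hq
      have h2δ : (0:ℂ) ≤ (α - β) + (α - β) := by
        convert hq using 1
        ring
      rw [Complex.nonneg_iff] at h2δ ⊢
      obtain ⟨hre, him⟩ := h2δ
      rw [Complex.add_re] at hre
      rw [Complex.add_im] at him
      exact ⟨by linarith, by linarith⟩

end thmsec

end
end
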